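/- arXiv:2003.04999 — 5 statements merged into one kernel-verified Lean document; each statement's English description precedes it below -/
import Mathlib

section
/- Assume a₁ > 0 and σ > −1 + 2/n (case (i), so that T₁ = ∞ and A(t) > 0, (d/dt)A(t) < 0 on [0,∞)). Then for any Y₀, Y₁ ∈ ℝⁿ there exist T > 0, R > 0 and a function Y ∈ C¹([0,T)) with ‖Y‖_{X(T)} ≤ R which solves the Cauchy problem (CY): D_t²Y(t) + A(t)Y(t) + λ|Y(t)|^{p−1}Y(t) = 0 on [0,T), Y(0) = Y₀, D_tY(0) = Y₁. -/
open MeasureTheory Set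

/-- The scale function `a(t)` of the homogeneous and isotropic spacetime. -/
noncomputable def scaleFun (n : ℕ) (σ a₀ a₁ : ℝ) (t : ℝ) : ℝ :=
  if σ = -1 then a₀ * Real.exp (a₁ * t / a₀)
  else a₀ * (1 + (n : ℝ) * (1 + σ) * a₁ * t / (2 * a₀)) ^ (2 / ((n : ℝ) * (1 + σ)))

/-- `q₀(t) = (d/dt)(a(t)²) / a(t)²`. -/
noncomputable def q0Fun (n : ℕ) (σ a₀ a₁ : ℝ) (t : ℝ) : ℝ :=
  deriv (fun s => (scaleFun n σ a₀ a₁ s) ^ 2) t / (scaleFun n σ a₀ a₁ t) ^ 2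

/-- `A(t) = -q₀(t)²/4 - (1/2) (d/dt) q₀(t)`. -/
noncomputable def AFun (n : ℕ) (σ a₀ a₁ : ℝ) (t : ℝ) : ℝ :=
  -(q0Fun n σ a₀ a₁ t) ^ 2 / 4 - (1 / 2) * deriv (q0Fun n σ a₀ a₁) t

lemma aux_rpow_ineq {q : ℝ} (hq : 0 < q) {x y : ℝ} (h0 : 0 ≤ y) (hyx : y ≤ x) :
    (x ^ q - y ^ q) * y ≤ max q 1 * x ^ q * (x - y) := by
  rcases eq_or_lt_of_le (h0.trans hyx) with hx | hx
  · have hx0 : x = 0 := hx.symm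
    have hy0 : y = 0 := le_antisymm (hx0 ▸ hyx) h0
    simp [hx0, hy0, Real.zero_rpow hq.ne']
  · set s := y / x with hs
    have hs0 : 0 ≤ s := div_nonneg h0 hx.le
    have hs1 : s ≤ 1 := (div_le_one hx).2 hyx
    have hy : y = s * x := by rw [hs, div_mul_cancel₀ y hx.ne']
    have hyq : y ^ q = s ^ q * x ^ q := by rw [hy, Real.mul_rpow hs0 hx.le]
    have hber : 1 - s ^ q ≤ max q 1 * (1 - s) := by
      rcases le_total 1 q with h1 | h1
      · have hb := one_add_mul_self_le_rpow_one_add (by linarith : (-1:ℝ) ≤ s - 1) h1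
        have h2 : (1 : ℝ) + (s - 1) = s := by ring
        rw [h2] at hb
        rw [max_eq_left h1]
        nlinarith
      · have hsq : s ≤ s ^ q := by
          rcases eq_or_lt_of_le hs0 with h | h
          · simp [← h, Real.zero_rpow hq.ne']
          · calc s = s ^ (1:ℝ) := (Real.rpow_one s).symm
              _ ≤ s ^ q := Real.rpow_le_rpow_of_exponent_ge h hs1 h1
        have h2 : (1:ℝ) ≤ max q 1 := le_max_right _ _
        nlinarith
    have hxq : 0 ≤ x ^ q := Real.rpow_nonneg hx.le q
    have hmax : (0:ℝ) ≤ max q 1 := le_trans zero_le_one (le_max_right q 1)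
    calc (x ^ q - y ^ q) * y = x ^ q * (1 - s ^ q) * y := by rw [hyq]; ring
      _ ≤ x ^ q * (max q 1 * (1 - s)) * y :=
          mul_le_mul_of_nonneg_right (mul_le_mul_of_nonneg_left hber hxq) h0
      _ = max q 1 * x ^ q * ((1 - s) * y) := by ring
      _ ≤ max q 1 * x ^ q * (x - y) := by
          apply mul_le_mul_of_nonneg_left _ (mul_nonneg hmax hxq)
          have h3 : (1 - s) * y ≤ (1 - s) * x := mul_le_mul_of_nonneg_left hyx (by linarith)
          have h4 : (1 - s) * x = x - y := by rw [hy]; ring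
          linarith

lemma aux_smul_lip {En : Type*} [NormedAddCommGroup En] [NormedSpace ℝ En]
    {q M : ℝ} (hq : 0 < q) (a b : En) (ha : ‖a‖ ≤ M) (hb : ‖b‖ ≤ M) :
    ‖‖a‖ ^ q • a - ‖b‖ ^ q • b‖ ≤ (1 + max q 1) * M ^ q * ‖a - b‖ := by
  have key : ∀ a b : En, ‖a‖ ≤ M → ‖b‖ ≤ M → ‖b‖ ≤ ‖a‖ →
      ‖‖a‖ ^ q • a - ‖b‖ ^ q • b‖ ≤ (1 + max q 1) * M ^ q * ‖a - b‖ := by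
    intro a b ha hb hba
    have hdec : ‖a‖ ^ q • a - ‖b‖ ^ q • b = ‖a‖ ^ q • (a - b) + (‖a‖ ^ q - ‖b‖ ^ q) • b := by
      rw [smul_sub, sub_smul]; abel
    rw [hdec]
    have h1 : ‖(‖a‖ ^ q : ℝ) • (a - b)‖ = ‖a‖ ^ q * ‖a - b‖ := by
      rw [norm_smul, Real.norm_eq_abs, abs_of_nonneg (Real.rpow_nonneg (norm_nonneg a) q)]
    have hqd : 0 ≤ ‖a‖ ^ q - ‖b‖ ^ q :=
      sub_nonneg.2 (Real.rpow_le_rpow (norm_nonneg b) hba hq.le)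
    have h2 : ‖(‖a‖ ^ q - ‖b‖ ^ q) • b‖ = (‖a‖ ^ q - ‖b‖ ^ q) * ‖b‖ := by
      rw [norm_smul, Real.norm_eq_abs, abs_of_nonneg hqd]
    have h3 := aux_rpow_ineq hq (norm_nonneg b) hba
    have h4 : ‖a‖ - ‖b‖ ≤ ‖a - b‖ := norm_sub_norm_le a b
    have h5 : ‖a‖ ^ q ≤ M ^ q := Real.rpow_le_rpow (norm_nonneg a) ha hq.le
    have hmax : (0:ℝ) ≤ max q 1 := le_trans zero_le_one (le_max_right q 1)
    have hxq : 0 ≤ ‖a‖ ^ q := Real.rpow_nonneg (norm_nonneg a) q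
    calc ‖(‖a‖ ^ q : ℝ) • (a - b) + (‖a‖ ^ q - ‖b‖ ^ q) • b‖
        ≤ ‖a‖ ^ q * ‖a - b‖ + (‖a‖ ^ q - ‖b‖ ^ q) * ‖b‖ := by
          rw [← h1, ← h2]; exact norm_add_le _ _
      _ ≤ M ^ q * ‖a - b‖ + max q 1 * ‖a‖ ^ q * (‖a‖ - ‖b‖) := by
          have := mul_le_mul_of_nonneg_right h5 (norm_nonneg (a - b))
          linarith
      _ ≤ M ^ q * ‖a - b‖ + max q 1 * M ^ q * ‖a - b‖ := by
          have hs : 0 ≤ ‖a‖ - ‖b‖ := sub_nonneg.2 hba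
          have := mul_le_mul (mul_le_mul_of_nonneg_left h5 hmax) h4 hs
            (mul_nonneg hmax (Real.rpow_nonneg ((norm_nonneg a).trans ha) q))
          linarith
      _ = (1 + max q 1) * M ^ q * ‖a - b‖ := by ring
  rcases le_total ‖b‖ ‖a‖ with hba | hab
  · exact key a b ha hb hba
  · rw [norm_sub_rev, norm_sub_rev a b]
    exact key b a hb ha hab

lemma afun_general (n : ℕ) (σ a₀ a₁ m c B : ℝ) (hσ : σ ≠ -1) (ha₀ : a₀ ≠ 0)
    (hm : m ≠ 0) (hmeq : m = (n:ℝ) * (1 + σ)) (hceq : c = m * a₁ / (2 * a₀))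
    (hBeq : B = (m/2 - 1) * (a₁/a₀)^2) :
    ∀ t : ℝ, 0 < 1 + c * t →
      AFun n σ a₀ a₁ t = B / (1 + c*t)^2
        ∧ deriv (AFun n σ a₀ a₁) t = -2 * B * c / (1 + c*t)^3 := by
  have hU : IsOpen {t : ℝ | 0 < 1 + c * t} := isOpen_lt continuous_const (by fun_prop)
  have hlin : ∀ t : ℝ, HasDerivAt (fun s : ℝ => 1 + c * s) c t := fun t => by
    simpa using ((hasDerivAt_id t).const_mul c).const_add 1
  have hscale : ∀ s ∈ {t : ℝ | 0 < 1 + c * t},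
      (scaleFun n σ a₀ a₁ s) ^ 2 = a₀^2 * (1 + c*s) ^ (4/m) := by
    intro s hs
    have hs' : (0:ℝ) < 1 + c * s := hs
    simp only [scaleFun, if_neg hσ]
    rw [show 1 + (n:ℝ)*(1+σ)*a₁*s/(2*a₀) = 1 + c*s by rw [hceq, hmeq]; ring,
      show 2/((n:ℝ)*(1+σ)) = 2/m by rw [hmeq], mul_pow]
    congr 1
    rw [← Real.rpow_natCast ((1 + c*s) ^ (2/m)) 2, ← Real.rpow_mul hs'.le]
    congr 1
    push_cast
    ring
  have q0eq : ∀ t ∈ {t : ℝ | 0 < 1 + c * t},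
      q0Fun n σ a₀ a₁ t = (2*a₁/a₀) / (1 + c*t) := by
    intro t ht
    have ht' : (0:ℝ) < 1 + c * t := ht
    have hder : HasDerivAt (fun s => a₀^2 * (1 + c*s)^(4/m))
        (a₀^2 * (c * (4/m) * (1 + c*t)^(4/m - 1))) t :=
      (((hlin t).rpow_const (Or.inl ht'.ne')).const_mul (a₀^2))
    have hev : (fun s => (scaleFun n σ a₀ a₁ s) ^ 2) =ᶠ[nhds t]
        (fun s => a₀^2 * (1 + c*s)^(4/m)) :=
      Filter.eventuallyEq_of_mem (hU.mem_nhds ht) hscale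
    have hderiv : deriv (fun s => (scaleFun n σ a₀ a₁ s) ^ 2) t
        = a₀^2 * (c * (4/m) * (1 + c*t)^(4/m - 1)) := by
      rw [hev.deriv_eq]; exact hder.deriv
    rw [q0Fun, hderiv, hscale t ht]
    rw [Real.rpow_sub ht', Real.rpow_one]
    have hv : (1 + c*t) ^ (4/m) ≠ 0 := (Real.rpow_pos_of_pos ht' _).ne'
    generalize (1 + c*t) ^ (4/m) = v at hv
    generalize hu' : (1 + c*t) = u at ht'
    rw [hceq]
    field_simp
    ring
  have q0der : ∀ t ∈ {t : ℝ | 0 < 1 + c * t},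
      deriv (q0Fun n σ a₀ a₁) t = (2*a₁/a₀) * (-c / (1 + c*t)^2) := by
    intro t ht
    have ht' : (0:ℝ) < 1 + c * t := ht
    have hev : (q0Fun n σ a₀ a₁) =ᶠ[nhds t] (fun s => (2*a₁/a₀) * (1 + c*s)⁻¹) :=
      Filter.eventuallyEq_of_mem (hU.mem_nhds ht) (fun s hs => by
        rw [q0eq s hs, div_eq_mul_inv])
    rw [hev.deriv_eq]
    exact (((hlin t).inv ht'.ne').const_mul (2*a₁/a₀)).deriv
  have Aeq : ∀ t ∈ {t : ℝ | 0 < 1 + c * t},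
      AFun n σ a₀ a₁ t = B / (1 + c*t)^2 := by
    intro t ht
    have ht' : (0:ℝ) < 1 + c * t := ht
    rw [AFun, q0eq t ht, q0der t ht]
    have hB : B = (2*a₁/a₀) * c / 2 - (2*a₁/a₀)^2/4 := by
      rw [hBeq, hceq]; field_simp; ring
    rw [hB]
    generalize hu' : (1 + c*t) = u at ht'
    field_simp [ht'.ne']
    ring
  intro t htp
  have ht : t ∈ {t : ℝ | 0 < 1 + c * t} := htp
  refine ⟨Aeq t ht, ?_⟩
  have hev : (AFun n σ a₀ a₁) =ᶠ[nhds t] (fun s => B * ((1 + c*s)^2)⁻¹) :=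
    Filter.eventuallyEq_of_mem (hU.mem_nhds ht) (fun s hs => by
      rw [Aeq s hs, div_eq_mul_inv])
  rw [hev.deriv_eq]
  have hder : HasDerivAt (fun s => B * ((1 + c*s)^2)⁻¹)
      (B * (-((2:ℕ) * (1 + c*t)^(2-1) * c) / ((1 + c*t)^2)^2)) t :=
    (((hlin t).pow 2).inv (pow_ne_zero 2 htp.ne')).const_mul _
  rw [hder.deriv]
  generalize hu' : (1 + c*t) = u at htp
  field_simp [htp.ne']
  ring

set_option maxHeartbeats 1000000 in
/-- Case (i): `a₁ > 0`, `σ > -1 + 2/n`. Local existence of a `C¹` solution of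
`D_t²Y + A(t)Y + λ|Y|^{p-1}Y = 0`, `Y(0) = Y₀`, `D_tY(0) = Y₁`, with finite `X(T)`-norm
bounded by some `R`. -/
theorem stmt_0 (n : ℕ) (hn : 1 ≤ n) (σ a₀ a₁ lam p : ℝ)
    (ha₀ : 0 < a₀) (ha₁ : 0 < a₁) (hσ : -1 + 2 / (n : ℝ) < σ) (hp : 1 < p)
    (Y₀ Y₁ : EuclideanSpace ℝ (Fin n)) :
    ∃ (T R : ℝ), 0 < T ∧ 0 < R ∧
      ∃ Y Y' : ℝ → EuclideanSpace ℝ (Fin n),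
        (∀ t ∈ Ico (0 : ℝ) T, HasDerivWithinAt Y (Y' t) (Ico (0 : ℝ) T) t) ∧
        (∀ t ∈ Ico (0 : ℝ) T, HasDerivWithinAt Y'
          (-(AFun n σ a₀ a₁ t • Y t) - (lam * ‖Y t‖ ^ (p - 1)) • Y t) (Ico (0 : ℝ) T) t) ∧
        ContinuousOn Y' (Ico (0 : ℝ) T) ∧
        Y 0 = Y₀ ∧ Y' 0 = Y₁ ∧
        eLpNorm Y' ⊤ (volume.restrict (Ioo (0 : ℝ) T)) +
          eLpNorm (fun t => Real.sqrt (AFun n σ a₀ a₁ t) • Y t) ⊤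
            (volume.restrict (Ioo (0 : ℝ) T)) +
          eLpNorm (fun t => Real.sqrt (-(deriv (AFun n σ a₀ a₁) t)) • Y t) 2
            (volume.restrict (Ioo (0 : ℝ) T))
          ≤ ENNReal.ofReal R := by
  classical
  have hn0 : (0:ℝ) < (n:ℝ) := by
    exact_mod_cast Nat.lt_of_lt_of_le Nat.zero_lt_one hn
  have hm2 : (2:ℝ) < (n:ℝ)*(1+σ) := by
    have h2n : 2/(n:ℝ) < 1 + σ := by linarith
    calc (2:ℝ) = (n:ℝ) * (2/(n:ℝ)) := by field_simp
      _ < (n:ℝ)*(1+σ) := mul_lt_mul_of_pos_left h2n hn0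
  have hσne : σ ≠ -1 := by
    intro h; rw [h] at hm2; simp at hm2; linarith
  have hmpos : (0:ℝ) < (n:ℝ)*(1+σ) := lt_trans two_pos hm2
  obtain ⟨c, hcdef⟩ : ∃ c : ℝ, c = (n:ℝ)*(1+σ)*a₁/(2*a₀) := ⟨_, rfl⟩
  obtain ⟨B, hBdef⟩ : ∃ B : ℝ, B = ((n:ℝ)*(1+σ)/2 - 1)*(a₁/a₀)^2 := ⟨_, rfl⟩
  have hc0 : 0 < c := by
    rw [hcdef]; exact div_pos (mul_pos hmpos ha₁) (by linarith)
  have hAF := afun_general n σ a₀ a₁ ((n:ℝ)*(1+σ)) c B hσne ha₀.ne' hmpos.ne' rfl hcdef hBdef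
  have hupos : ∀ t : ℝ, 0 ≤ t → 0 < 1 + c * t := fun t ht => by nlinarith
  have huge : ∀ t : ℝ, 0 ≤ t → 1 ≤ 1 + c * t := fun t ht => by nlinarith
  have hAbound : ∀ t : ℝ, 0 ≤ t → |AFun n σ a₀ a₁ t| ≤ |B| := by
    intro t ht
    rw [(hAF t (hupos t ht)).1, abs_div]
    have h1 : (1:ℝ) ≤ |(1 + c*t)^2| := by
      rw [abs_of_nonneg (by positivity)]
      nlinarith [huge t ht]
    exact div_le_self (abs_nonneg B) h1
  have hq : 0 < p - 1 := by linarith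
  have hmax0 : (0:ℝ) ≤ 1 + max (p-1) 1 := by
    have := le_max_right (p-1) 1; linarith
  obtain ⟨x₀, hx₀def⟩ : ∃ x₀ : EuclideanSpace ℝ (Fin n) × EuclideanSpace ℝ (Fin n),
      x₀ = (Y₀, Y₁) := ⟨_, rfl⟩
  obtain ⟨M, hMdef⟩ : ∃ M : ℝ, M = ‖x₀‖ + 1 := ⟨_, rfl⟩
  have hM1 : 1 ≤ M := by rw [hMdef]; have := norm_nonneg x₀; linarith
  have hM0 : 0 ≤ M := le_trans zero_le_one hM1
  have hMq0 : 0 ≤ M ^ (p-1) := Real.rpow_nonneg hM0 _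
  obtain ⟨L₀, hL₀def⟩ : ∃ L₀ : ℝ,
      L₀ = |B| + |lam| * ((1 + max (p-1) 1) * M ^ (p-1)) := ⟨_, rfl⟩
  obtain ⟨L, hLdef⟩ : ∃ L : ℝ, L = max 1 L₀ := ⟨_, rfl⟩
  have hL1 : 1 ≤ L := hLdef ▸ le_max_left _ _
  have hL0 : 0 ≤ L := le_trans zero_le_one hL1
  have hLL : L₀ ≤ L := hLdef ▸ le_max_right _ _
  obtain ⟨C, hCdef⟩ : ∃ C : ℝ, C = M * (1 + |B| + |lam| * M ^ (p-1)) + 1 := ⟨_, rfl⟩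
  have hC0 : 0 < C := by
    rw [hCdef]
    have h1 : (0:ℝ) ≤ |lam| * M ^ (p-1) := mul_nonneg (abs_nonneg _) hMq0
    nlinarith [abs_nonneg B]
  obtain ⟨T, hTdef⟩ : ∃ T : ℝ, T = 1/C := ⟨_, rfl⟩
  have hT0 : 0 < T := hTdef ▸ one_div_pos.2 hC0
  obtain ⟨v, hvdef⟩ : ∃ v : ℝ → (EuclideanSpace ℝ (Fin n) × EuclideanSpace ℝ (Fin n)) →
      (EuclideanSpace ℝ (Fin n) × EuclideanSpace ℝ (Fin n)),
      v = fun t x => (x.2, -(AFun n σ a₀ a₁ t • x.1) - (lam * ‖x.1‖ ^ (p - 1)) • x.1) :=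
    ⟨_, rfl⟩
  have hball : ∀ x : EuclideanSpace ℝ (Fin n) × EuclideanSpace ℝ (Fin n),
      x ∈ Metric.closedBall x₀ 1 → ‖x‖ ≤ M := by
    intro x hx
    have h1 : ‖x - x₀‖ ≤ 1 := mem_closedBall_iff_norm.1 hx
    have h2 : ‖x‖ - ‖x₀‖ ≤ ‖x - x₀‖ := norm_sub_norm_le x x₀
    rw [hMdef]; linarith
  have contA : ContinuousOn (AFun n σ a₀ a₁) (Icc 0 T) := by
    apply ContinuousOn.congr (f := fun t => B / (1 + c*t)^2)
    · exact ContinuousOn.div continuousOn_const (by fun_prop)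
        (fun t ht => pow_ne_zero 2 (hupos t ht.1).ne')
    · exact fun t ht => (hAF t (hupos t ht.1)).1
  have hlip : ∀ t ∈ Icc (0:ℝ) T,
      LipschitzOnWith (Real.toNNReal L) (v t) (Metric.closedBall x₀ 1) := by
    intro t ht
    rw [lipschitzOnWith_iff_norm_sub_le]
    intro x hx y hy
    rw [Real.coe_toNNReal L hL0]
    have hx1 : ‖x.1‖ ≤ M := le_trans (norm_fst_le x) (hball x hx)
    have hy1 : ‖y.1‖ ≤ M := le_trans (norm_fst_le y) (hball y hy)
    have hAt : |AFun n σ a₀ a₁ t| ≤ |B| := hAbound t ht.1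
    have hvsub : v t x - v t y =
        (x.2 - y.2,
          -(AFun n σ a₀ a₁ t • (x.1 - y.1))
            - lam • (‖x.1‖ ^ (p-1) • x.1 - ‖y.1‖ ^ (p-1) • y.1)) := by
      rw [hvdef]
      dsimp only
      rw [Prod.mk_sub_mk]
      simp only [Prod.mk.injEq, true_and]
      simp only [smul_sub, mul_smul]
      abel
    rw [hvsub, Prod.norm_def]
    dsimp only
    apply max_le
    · have h1 : ‖x.2 - y.2‖ ≤ ‖x - y‖ := norm_snd_le (x - y)
      have h2 : ‖x - y‖ ≤ L * ‖x - y‖ := le_mul_of_one_le_left (norm_nonneg _) hL1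
      linarith
    · have hfst : ‖x.1 - y.1‖ ≤ ‖x - y‖ := norm_fst_le (x - y)
      have hD := aux_smul_lip hq x.1 y.1 hx1 hy1
      have e0 : ‖-(AFun n σ a₀ a₁ t • (x.1 - y.1))
            - lam • (‖x.1‖ ^ (p-1) • x.1 - ‖y.1‖ ^ (p-1) • y.1)‖
          ≤ |AFun n σ a₀ a₁ t| * ‖x.1 - y.1‖
            + |lam| * ‖‖x.1‖ ^ (p-1) • x.1 - ‖y.1‖ ^ (p-1) • y.1‖ := by
        rw [show -(AFun n σ a₀ a₁ t • (x.1 - y.1))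
              - lam • (‖x.1‖ ^ (p-1) • x.1 - ‖y.1‖ ^ (p-1) • y.1)
            = -((AFun n σ a₀ a₁ t • (x.1 - y.1))
              + lam • (‖x.1‖ ^ (p-1) • x.1 - ‖y.1‖ ^ (p-1) • y.1)) by abel, norm_neg]
        refine le_trans (norm_add_le _ _) ?_
        rw [norm_smul, norm_smul, Real.norm_eq_abs, Real.norm_eq_abs]
      have e1 : |AFun n σ a₀ a₁ t| * ‖x.1 - y.1‖ ≤ |B| * ‖x - y‖ :=
        mul_le_mul hAt hfst (norm_nonneg _) (abs_nonneg B)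
      have e2 : ‖‖x.1‖ ^ (p-1) • x.1 - ‖y.1‖ ^ (p-1) • y.1‖
          ≤ (1 + max (p-1) 1) * M ^ (p-1) * ‖x - y‖ :=
        le_trans hD (mul_le_mul_of_nonneg_left hfst (mul_nonneg hmax0 hMq0))
      have e3 : |lam| * ‖‖x.1‖ ^ (p-1) • x.1 - ‖y.1‖ ^ (p-1) • y.1‖
          ≤ |lam| * ((1 + max (p-1) 1) * M ^ (p-1) * ‖x - y‖) :=
        mul_le_mul_of_nonneg_left e2 (abs_nonneg lam)
      have e4 : |B| * ‖x - y‖ + |lam| * ((1 + max (p-1) 1) * M ^ (p-1) * ‖x - y‖)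
          = L₀ * ‖x - y‖ := by rw [hL₀def]; ring
      have e5 : L₀ * ‖x - y‖ ≤ L * ‖x - y‖ :=
        mul_le_mul_of_nonneg_right hLL (norm_nonneg _)
      linarith
  have hcont : ∀ x ∈ Metric.closedBall x₀ 1,
      ContinuousOn (fun t => v t x) (Icc (0:ℝ) T) := by
    intro x _
    rw [hvdef]
    dsimp only
    exact ContinuousOn.prodMk continuousOn_const
      (((contA.smul continuousOn_const).neg).sub continuousOn_const)
  have hnorm : ∀ t ∈ Icc (0:ℝ) T, ∀ x ∈ Metric.closedBall x₀ 1, ‖v t x‖ ≤ C := by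
    intro t ht x hx
    have hx1 : ‖x.1‖ ≤ M := le_trans (norm_fst_le x) (hball x hx)
    have hx2 : ‖x.2‖ ≤ M := le_trans (norm_snd_le x) (hball x hx)
    have hAt := hAbound t ht.1
    have hrq : ‖x.1‖ ^ (p-1) ≤ M ^ (p-1) := Real.rpow_le_rpow (norm_nonneg _) hx1 hq.le
    have hrq0 : 0 ≤ ‖x.1‖ ^ (p-1) := Real.rpow_nonneg (norm_nonneg _) _
    have hlM : (0:ℝ) ≤ |lam| * M ^ (p-1) := mul_nonneg (abs_nonneg _) hMq0
    rw [hvdef]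
    dsimp only
    rw [Prod.norm_def]
    dsimp only
    apply max_le
    · calc ‖x.2‖ ≤ M := hx2
        _ ≤ C := by rw [hCdef]; nlinarith [abs_nonneg B]
    · have e0 : ‖-(AFun n σ a₀ a₁ t • x.1) - (lam * ‖x.1‖ ^ (p-1)) • x.1‖
          ≤ |AFun n σ a₀ a₁ t| * ‖x.1‖ + |lam| * ‖x.1‖ ^ (p-1) * ‖x.1‖ := by
        rw [show -(AFun n σ a₀ a₁ t • x.1) - (lam * ‖x.1‖ ^ (p-1)) • x.1
            = -((AFun n σ a₀ a₁ t • x.1) + (lam * ‖x.1‖ ^ (p-1)) • x.1) by abel, norm_neg]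
        refine le_trans (norm_add_le _ _) ?_
        rw [norm_smul, norm_smul, Real.norm_eq_abs, Real.norm_eq_abs, abs_mul,
          abs_of_nonneg hrq0]
      have e1 : |AFun n σ a₀ a₁ t| * ‖x.1‖ ≤ |B| * M :=
        mul_le_mul hAt hx1 (norm_nonneg _) (abs_nonneg _)
      have e2 : |lam| * ‖x.1‖ ^ (p-1) * ‖x.1‖ ≤ |lam| * M ^ (p-1) * M :=
        mul_le_mul (mul_le_mul_of_nonneg_left hrq (abs_nonneg _)) hx1 (norm_nonneg _) hlM
      have e3 : |B| * M + |lam| * M ^ (p-1) * M ≤ C := by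
        rw [hCdef]; nlinarith [abs_nonneg B]
      linarith
  have hPL : IsPicardLindelof v (tmin := 0) (tmax := T) ⟨0, ⟨le_refl 0, hT0.le⟩⟩ x₀ 1 0
      (Real.toNNReal C) (Real.toNNReal L) :=
    ⟨fun t ht => by simpa only [NNReal.coe_one] using hlip t ht,
      fun x hx => hcont x (by simpa only [NNReal.coe_one] using hx),
      fun t ht x hx => by
        rw [Real.coe_toNNReal C hC0.le]
        exact hnorm t ht x (by simpa only [NNReal.coe_one] using hx), by
      show (Real.toNNReal C : ℝ) * max (T - 0) (0 - 0) ≤ ((1:NNReal):ℝ) - ((0:NNReal):ℝ)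
      rw [Real.coe_toNNReal C hC0.le, NNReal.coe_one, NNReal.coe_zero,
        sub_zero, sub_self, max_eq_left hT0.le, hTdef, mul_one_div, div_self hC0.ne']
      norm_num⟩
  obtain ⟨f, hf0, hfd⟩ := hPL.exists_eq_forall_mem_Icc_hasDerivWithinAt₀
  have hfc : ContinuousOn f (Icc (0:ℝ) T) := fun t ht => (hfd t ht).continuousWithinAt
  have hYc : ContinuousOn (fun t => (f t).1) (Icc (0:ℝ) T) :=
    continuous_fst.comp_continuousOn hfc
  have hY'c : ContinuousOn (fun t => (f t).2) (Icc (0:ℝ) T) :=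
    continuous_snd.comp_continuousOn hfc
  have contDA : ContinuousOn (deriv (AFun n σ a₀ a₁)) (Icc (0:ℝ) T) := by
    apply ContinuousOn.congr (f := fun t => -2 * B * c / (1 + c*t)^3)
    · exact ContinuousOn.div continuousOn_const (by fun_prop)
        (fun t ht => pow_ne_zero 3 (hupos t ht.1).ne')
    · exact fun t ht => (hAF t (hupos t ht.1)).2
  have cont2 : ContinuousOn (fun t => Real.sqrt (AFun n σ a₀ a₁ t) • (f t).1)
      (Icc (0:ℝ) T) := (Real.continuous_sqrt.comp_continuousOn contA).smul hYc
  have cont3 : ContinuousOn (fun t => Real.sqrt (-(deriv (AFun n σ a₀ a₁) t)) • (f t).1)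
      (Icc (0:ℝ) T) := (Real.continuous_sqrt.comp_continuousOn contDA.neg).smul hYc
  obtain ⟨C₁, hC₁⟩ := isCompact_Icc.exists_bound_of_continuousOn hY'c
  obtain ⟨C₂, hC₂⟩ := isCompact_Icc.exists_bound_of_continuousOn cont2
  obtain ⟨C₃, hC₃⟩ := isCompact_Icc.exists_bound_of_continuousOn cont3
  have n1 : (0:ℝ) ≤ max C₁ 0 := le_max_right _ _
  have n2 : (0:ℝ) ≤ max C₂ 0 := le_max_right _ _
  have n3 : (0:ℝ) ≤ Real.sqrt T * max C₃ 0 :=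
    mul_nonneg (Real.sqrt_nonneg T) (le_max_right _ _)
  refine ⟨T, max C₁ 0 + max C₂ 0 + Real.sqrt T * max C₃ 0 + 1, hT0, by linarith,
    (fun t => (f t).1), (fun t => (f t).2), ?_, ?_, ?_, ?_, ?_, ?_⟩
  · intro t ht
    have h := (hfd t (Ico_subset_Icc_self ht)).mono Ico_subset_Icc_self
    have h2 := (ContinuousLinearMap.fst ℝ (EuclideanSpace ℝ (Fin n))
      (EuclideanSpace ℝ (Fin n))).hasFDerivAt.comp_hasDerivWithinAt t h
    rw [hvdef] at h2
    simp at h2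
    exact h2
  · intro t ht
    have h := (hfd t (Ico_subset_Icc_self ht)).mono Ico_subset_Icc_self
    have h2 := (ContinuousLinearMap.snd ℝ (EuclideanSpace ℝ (Fin n))
      (EuclideanSpace ℝ (Fin n))).hasFDerivAt.comp_hasDerivWithinAt t h
    rw [hvdef] at h2
    simp at h2
    exact h2
  · exact hY'c.mono Ico_subset_Icc_self
  · show (f 0).1 = Y₀
    rw [hf0, hx₀def]
  · show (f 0).2 = Y₁
    rw [hf0, hx₀def]
  · have hsub : Ioo (0:ℝ) T ⊆ Icc 0 T := Ioo_subset_Icc_self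
    have hb1 : ∀ᵐ t ∂(volume.restrict (Ioo (0:ℝ) T)), ‖(f t).2‖ ≤ max C₁ 0 :=
      (ae_restrict_iff' measurableSet_Ioo).2 (ae_of_all _ fun t ht =>
        le_trans (hC₁ t (hsub ht)) (le_max_left _ _))
    have hb2 : ∀ᵐ t ∂(volume.restrict (Ioo (0:ℝ) T)),
        ‖Real.sqrt (AFun n σ a₀ a₁ t) • (f t).1‖ ≤ max C₂ 0 :=
      (ae_restrict_iff' measurableSet_Ioo).2 (ae_of_all _ fun t ht =>
        le_trans (hC₂ t (hsub ht)) (le_max_left _ _))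
    have hb3 : ∀ᵐ t ∂(volume.restrict (Ioo (0:ℝ) T)),
        ‖Real.sqrt (-(deriv (AFun n σ a₀ a₁) t)) • (f t).1‖ ≤ max C₃ 0 :=
      (ae_restrict_iff' measurableSet_Ioo).2 (ae_of_all _ fun t ht =>
        le_trans (hC₃ t (hsub ht)) (le_max_left _ _))
    have e1 := eLpNorm_le_of_ae_bound (p := ⊤) hb1
    have e2 := eLpNorm_le_of_ae_bound (p := ⊤) hb2
    have e3 := eLpNorm_le_of_ae_bound (p := 2) hb3
    simp only [ENNReal.toReal_top, inv_zero, ENNReal.rpow_zero, one_mul] at e1 e2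
    rw [Measure.restrict_apply_univ, Real.volume_Ioo, sub_zero] at e3
    have h2r : ((2:ENNReal).toReal)⁻¹ = (1/2:ℝ) := by norm_num
    rw [h2r, ENNReal.ofReal_rpow_of_pos hT0, ← Real.sqrt_eq_rpow,
      ← ENNReal.ofReal_mul (Real.sqrt_nonneg T)] at e3
    calc eLpNorm (fun t => (f t).2) ⊤ (volume.restrict (Ioo (0:ℝ) T)) +
          eLpNorm (fun t => Real.sqrt (AFun n σ a₀ a₁ t) • (f t).1) ⊤
            (volume.restrict (Ioo (0:ℝ) T)) +
          eLpNorm (fun t => Real.sqrt (-(deriv (AFun n σ a₀ a₁) t)) • (f t).1) 2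
            (volume.restrict (Ioo (0:ℝ) T))
        ≤ ENNReal.ofReal (max C₁ 0) + ENNReal.ofReal (max C₂ 0)
            + ENNReal.ofReal (Real.sqrt T * max C₃ 0) :=
          add_le_add (add_le_add e1 e2) e3
      _ ≤ ENNReal.ofReal (max C₁ 0 + max C₂ 0 + Real.sqrt T * max C₃ 0 + 1) := by
          rw [← ENNReal.ofReal_add n1 n2, ← ENNReal.ofReal_add (by linarith) n3]
          exact ENNReal.ofReal_le_ofReal (by linarith)
end

section
/- Assume a₁ > 0 and σ > −1 + 2/n (case (i)). Let T > 0 and let Y, Z ∈ C¹([0,T)) with ‖Y‖_{X(T)} < ∞ and ‖Z‖_{X(T)} < ∞ both solve D_t²Y(t) + A(t)Y(t) + λ|Y(t)|^{p−1}Y(t) = 0 on [0,T) with the same initial data Y(0) = Z(0) = Y₀ and D_tY(0) = D_tZ(0) = Y₁. Then Y = Z on [0,T). -/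
open MeasureTheory Set Filter Metric

/-- The `X(T)`-norm (as an extended nonnegative real):
`‖D_tY‖_{L^∞((0,T))} + ‖√A·Y‖_{L^∞((0,T))} + ‖√(-D_tA)·Y‖_{L²((0,T))}`. -/
noncomputable def XNorm (n : ℕ) (σ a₀ a₁ T : ℝ)
    (Y Y' : ℝ → EuclideanSpace ℝ (Fin n)) : ENNReal :=
  eLpNorm Y' ⊤ (volume.restrict (Ioo (0 : ℝ) T)) +
    eLpNorm (fun t => Real.sqrt (AFun n σ a₀ a₁ t) • Y t) ⊤ (volume.restrict (Ioo (0 : ℝ) T)) +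
    eLpNorm (fun t => Real.sqrt (-(deriv (AFun n σ a₀ a₁) t)) • Y t) 2
      (volume.restrict (Ioo (0 : ℝ) T))

section AuxLemmas


private lemma rpow_mul_sub_le' {q a b : ℝ} (hq : 0 < q) (hb : 0 ≤ b) (hba : b ≤ a) :
    b * (a ^ q - b ^ q) ≤ q * a ^ q * (a - b) := by
  rcases hb.eq_or_lt with hb0 | hb0
  · subst hb0
    simp only [mul_zero, zero_mul, sub_zero]
    positivity
  rcases hba.eq_or_lt with hab | hab
  · subst hab; simp
  have ha : 0 < a := hb0.trans hab
  obtain ⟨ξ, hξ, hslope⟩ := exists_hasDerivAt_eq_slope (fun u => b * u ^ q)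
      (fun u => b * (q * u ^ (q - 1))) hab
      (continuousOn_const.mul (fun x _ => (Real.continuousAt_rpow_const x q
        (Or.inr hq.le)).continuousWithinAt))
      (fun x hx => (Real.hasDerivAt_rpow_const (Or.inl (hb0.trans hx.1).ne')).const_mul b)
  have hξ0 : 0 < ξ := hb0.trans hξ.1
  have hstep : b * (q * ξ ^ (q - 1)) ≤ q * a ^ q := by
    have h1 : b * ξ ^ (q - 1) ≤ ξ * ξ ^ (q - 1) :=
      mul_le_mul_of_nonneg_right hξ.1.le (Real.rpow_nonneg hξ0.le _)
    have h2 : ξ * ξ ^ (q - 1) = ξ ^ q := by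
      rw [mul_comm, ← Real.rpow_add_one hξ0.ne' (q - 1)]; ring_nf
    have h3 : ξ ^ q ≤ a ^ q := Real.rpow_le_rpow hξ0.le hξ.2.le hq.le
    calc b * (q * ξ ^ (q - 1)) = q * (b * ξ ^ (q - 1)) := by ring
      _ ≤ q * (ξ * ξ ^ (q - 1)) := by
          exact mul_le_mul_of_nonneg_left h1 hq.le
      _ = q * ξ ^ q := by rw [h2]
      _ ≤ q * a ^ q := mul_le_mul_of_nonneg_left h3 hq.le
  have heq : b * (a ^ q - b ^ q) = b * (q * ξ ^ (q - 1)) * (a - b) := by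
    have h := hslope
    rw [eq_div_iff (sub_ne_zero.2 hab.ne')] at h
    rw [h]; ring
  rw [heq]
  exact mul_le_mul_of_nonneg_right hstep (by linarith)

private lemma norm_rpow_smul_sub_le {E : Type*} [NormedAddCommGroup E] [NormedSpace ℝ E]
    {q R : ℝ} (hq : 0 < q) (x y : E) (hx : ‖x‖ ≤ R) (hy : ‖y‖ ≤ R) :
    ‖‖x‖ ^ q • x - ‖y‖ ^ q • y‖ ≤ (1 + q) * R ^ q * ‖x - y‖ := by
  wlog h : ‖y‖ ≤ ‖x‖ generalizing x y
  · rw [norm_sub_rev, norm_sub_rev x]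
    exact this y x hy hx (le_of_not_ge h)
  have hR : 0 ≤ R := (norm_nonneg x).trans hx
  have hxq : ‖x‖ ^ q ≤ R ^ q := Real.rpow_le_rpow (norm_nonneg x) hx hq.le
  have hyx : ‖y‖ ^ q ≤ ‖x‖ ^ q := Real.rpow_le_rpow (norm_nonneg y) h hq.le
  have key : ‖x‖ ^ q • x - ‖y‖ ^ q • y = ‖x‖ ^ q • (x - y) + (‖x‖ ^ q - ‖y‖ ^ q) • y := by
    module
  rw [key]
  have h1 : ‖(‖x‖ ^ q) • (x - y)‖ ≤ R ^ q * ‖x - y‖ := by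
    rw [norm_smul, Real.norm_eq_abs, abs_of_nonneg (Real.rpow_nonneg (norm_nonneg x) q)]
    exact mul_le_mul_of_nonneg_right hxq (norm_nonneg _)
  have h2 : ‖(‖x‖ ^ q - ‖y‖ ^ q) • y‖ ≤ q * R ^ q * ‖x - y‖ := by
    rw [norm_smul, Real.norm_eq_abs, abs_of_nonneg (sub_nonneg.2 hyx)]
    have := rpow_mul_sub_le' hq (norm_nonneg y) h
    calc (‖x‖ ^ q - ‖y‖ ^ q) * ‖y‖ = ‖y‖ * (‖x‖ ^ q - ‖y‖ ^ q) := by ring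
      _ ≤ q * ‖x‖ ^ q * (‖x‖ - ‖y‖) := this
      _ ≤ q * R ^ q * ‖x - y‖ := by
          have hnn : 0 ≤ ‖x‖ - ‖y‖ := sub_nonneg.2 h
          have hmm : ‖x‖ ^ q * (‖x‖ - ‖y‖) ≤ R ^ q * ‖x - y‖ :=
            mul_le_mul hxq (norm_sub_norm_le x y) hnn (Real.rpow_nonneg hR q)
          calc q * ‖x‖ ^ q * (‖x‖ - ‖y‖) = q * (‖x‖ ^ q * (‖x‖ - ‖y‖)) := by ring
            _ ≤ q * (R ^ q * ‖x - y‖) := mul_le_mul_of_nonneg_left hmm hq.le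
            _ = q * R ^ q * ‖x - y‖ := by ring
  calc ‖(‖x‖ ^ q) • (x - y) + (‖x‖ ^ q - ‖y‖ ^ q) • y‖
      ≤ ‖(‖x‖ ^ q) • (x - y)‖ + ‖(‖x‖ ^ q - ‖y‖ ^ q) • y‖ := norm_add_le _ _
    _ ≤ R ^ q * ‖x - y‖ + q * R ^ q * ‖x - y‖ := add_le_add h1 h2
    _ = (1 + q) * R ^ q * ‖x - y‖ := by ring




variable {n : ℕ} {σ a₀ a₁ c e : ℝ}

private lemma scaleFun_eq' (hσ : σ ≠ -1)
    (hc : c = (n : ℝ) * (1 + σ) * a₁ / (2 * a₀)) (he : e = 2 / ((n : ℝ) * (1 + σ))) (s : ℝ) :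
    scaleFun n σ a₀ a₁ s = a₀ * (1 + c * s) ^ e := by
  rw [scaleFun, if_neg hσ, he]
  have : 1 + (n : ℝ) * (1 + σ) * a₁ * s / (2 * a₀) = 1 + c * s := by rw [hc]; ring
  rw [this]

private lemma sq_scaleFun_eq' (hσ : σ ≠ -1)
    (hc : c = (n : ℝ) * (1 + σ) * a₁ / (2 * a₀)) (he : e = 2 / ((n : ℝ) * (1 + σ)))
    {s : ℝ} (hs : 0 < 1 + c * s) :
    (scaleFun n σ a₀ a₁ s) ^ 2 = a₀ ^ 2 * (1 + c * s) ^ (2 * e) := by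
  rw [scaleFun_eq' hσ hc he, mul_pow]
  congr 1
  rw [← Real.rpow_natCast ((1 + c * s) ^ e) 2, ← Real.rpow_mul hs.le]
  norm_num [mul_comm]

private lemma hasDerivAt_affine (c t : ℝ) : HasDerivAt (fun u : ℝ => 1 + c * u) c t := by
  simpa using ((hasDerivAt_id t).const_mul c).const_add 1

private lemma isOpen_U (c : ℝ) : IsOpen {u : ℝ | 0 < 1 + c * u} :=
  isOpen_lt continuous_const (by fun_prop)

private lemma deriv_sq_scaleFun (hσ : σ ≠ -1)
    (hc : c = (n : ℝ) * (1 + σ) * a₁ / (2 * a₀)) (he : e = 2 / ((n : ℝ) * (1 + σ)))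
    {t : ℝ} (ht : 0 < 1 + c * t) :
    deriv (fun u => (scaleFun n σ a₀ a₁ u) ^ 2) t
      = a₀ ^ 2 * (c * (2 * e) * (1 + c * t) ^ (2 * e - 1)) := by
  have hev : (fun u => (scaleFun n σ a₀ a₁ u) ^ 2)
      =ᶠ[nhds t] fun u => a₀ ^ 2 * (1 + c * u) ^ (2 * e) :=
    eventually_of_mem ((isOpen_U c).mem_nhds ht) fun u hu => sq_scaleFun_eq' hσ hc he hu
  rw [hev.deriv_eq]
  exact (((hasDerivAt_affine c t).rpow_const (Or.inl ht.ne')).const_mul (a₀ ^ 2)).deriv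

private lemma q0Fun_eq' (hσ : σ ≠ -1) (ha₀ : a₀ ≠ 0)
    (hc : c = (n : ℝ) * (1 + σ) * a₁ / (2 * a₀)) (he : e = 2 / ((n : ℝ) * (1 + σ)))
    {t : ℝ} (ht : 0 < 1 + c * t) :
    q0Fun n σ a₀ a₁ t = 2 * e * c / (1 + c * t) := by
  rw [q0Fun, deriv_sq_scaleFun hσ hc he ht, sq_scaleFun_eq' hσ hc he ht]
  have h1 : (1 + c * t) ^ (2 * e - 1) = (1 + c * t) ^ (2 * e) / (1 + c * t) := by
    rw [Real.rpow_sub ht, Real.rpow_one]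
  have h2 : (1 + c * t) ^ (2 * e) ≠ 0 := (Real.rpow_pos_of_pos ht _).ne'
  have h3 : (1 + c * t) ≠ 0 := ht.ne'
  rw [h1]
  field_simp

private lemma deriv_q0Fun (hσ : σ ≠ -1) (ha₀ : a₀ ≠ 0)
    (hc : c = (n : ℝ) * (1 + σ) * a₁ / (2 * a₀)) (he : e = 2 / ((n : ℝ) * (1 + σ)))
    {t : ℝ} (ht : 0 < 1 + c * t) :
    deriv (q0Fun n σ a₀ a₁) t = -(2 * e * c * c) / (1 + c * t) ^ 2 := by
  have hev : q0Fun n σ a₀ a₁ =ᶠ[nhds t] fun u => 2 * e * c * (1 + c * u)⁻¹ := by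
    refine eventually_of_mem ((isOpen_U c).mem_nhds ht) fun u hu => ?_
    rw [q0Fun_eq' hσ ha₀ hc he hu, div_eq_mul_inv]
  have hd : HasDerivAt (fun u => 2 * e * c * (1 + c * u)⁻¹) _ t :=
    ((hasDerivAt_affine c t).inv ht.ne').const_mul (2 * e * c)
  rw [hev.deriv_eq, hd.deriv]
  field_simp

private lemma AFun_eq' (hσ : σ ≠ -1) (ha₀ : a₀ ≠ 0)
    (hc : c = (n : ℝ) * (1 + σ) * a₁ / (2 * a₀)) (he : e = 2 / ((n : ℝ) * (1 + σ)))
    {t : ℝ} (ht : 0 < 1 + c * t) :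
    AFun n σ a₀ a₁ t = (e - e ^ 2) * c ^ 2 / (1 + c * t) ^ 2 := by
  rw [AFun, q0Fun_eq' hσ ha₀ hc he ht, deriv_q0Fun hσ ha₀ hc he ht]
  have h3 : (1 + c * t) ≠ 0 := ht.ne'
  field_simp
  ring

private lemma AFun_bound (hσ : σ ≠ -1) (ha₀ : a₀ ≠ 0) (hcpos : 0 < c)
    (hc : c = (n : ℝ) * (1 + σ) * a₁ / (2 * a₀)) (he : e = 2 / ((n : ℝ) * (1 + σ)))
    {t : ℝ} (ht : 0 ≤ t) :
    |AFun n σ a₀ a₁ t| ≤ |(e - e ^ 2) * c ^ 2| := by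
  have hx : (1:ℝ) ≤ 1 + c * t := by nlinarith
  have ht' : 0 < 1 + c * t := by linarith
  rw [AFun_eq' hσ ha₀ hc he ht', abs_div]
  have h1 : (1:ℝ) ≤ |(1 + c * t) ^ 2| := by
    rw [abs_of_nonneg (by positivity)]
    nlinarith
  calc |(e - e ^ 2) * c ^ 2| / |(1 + c * t) ^ 2| ≤ |(e - e ^ 2) * c ^ 2| / 1 :=
        div_le_div_of_nonneg_left (abs_nonneg _) one_pos h1
    _ = _ := div_one _

end AuxLemmas

/-- Case (i): `a₁ > 0`, `σ > -1 + 2/n`. Uniqueness of `C¹` solutions with finite `X(T)`-norm of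
`D_t²Y + A(t)Y + λ|Y|^{p-1}Y = 0` with the same initial data. -/
theorem stmt_1 (n : ℕ) (hn : 1 ≤ n) (σ a₀ a₁ lam p : ℝ)
    (ha₀ : 0 < a₀) (ha₁ : 0 < a₁) (hσ : -1 + 2 / (n : ℝ) < σ) (hp : 1 < p)
    (T : ℝ) (hT : 0 < T)
    (Y₀ Y₁ : EuclideanSpace ℝ (Fin n))
    (Y Y' Z Z' : ℝ → EuclideanSpace ℝ (Fin n))
    (hY1 : ∀ t ∈ Ico (0 : ℝ) T, HasDerivWithinAt Y (Y' t) (Ico (0 : ℝ) T) t)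
    (hY2 : ∀ t ∈ Ico (0 : ℝ) T, HasDerivWithinAt Y'
      (-(AFun n σ a₀ a₁ t • Y t) - (lam * ‖Y t‖ ^ (p - 1)) • Y t) (Ico (0 : ℝ) T) t)
    (hYc : ContinuousOn Y' (Ico (0 : ℝ) T))
    (hYX : XNorm n σ a₀ a₁ T Y Y' < ⊤)
    (hZ1 : ∀ t ∈ Ico (0 : ℝ) T, HasDerivWithinAt Z (Z' t) (Ico (0 : ℝ) T) t)
    (hZ2 : ∀ t ∈ Ico (0 : ℝ) T, HasDerivWithinAt Z'
      (-(AFun n σ a₀ a₁ t • Z t) - (lam * ‖Z t‖ ^ (p - 1)) • Z t) (Ico (0 : ℝ) T) t)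
    (hZc : ContinuousOn Z' (Ico (0 : ℝ) T))
    (hZX : XNorm n σ a₀ a₁ T Z Z' < ⊤)
    (hY0 : Y 0 = Y₀) (hZ0 : Z 0 = Y₀) (hY'0 : Y' 0 = Y₁) (hZ'0 : Z' 0 = Y₁) :
    ∀ t ∈ Ico (0 : ℝ) T, Y t = Z t := by
  have hn' : (1:ℝ) ≤ (n:ℝ) := by exact_mod_cast hn
  have h2n : 0 < 2 / (n:ℝ) := by positivity
  have hσ1 : (-1:ℝ) < σ := by linarith
  have hσne : σ ≠ -1 := by intro h; rw [h] at hσ1; exact lt_irrefl _ hσ1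
  have hσp : 0 < 1 + σ := by linarith
  set c : ℝ := (n : ℝ) * (1 + σ) * a₁ / (2 * a₀) with hc
  set e : ℝ := 2 / ((n : ℝ) * (1 + σ)) with he
  have hcpos : 0 < c := by rw [hc]; positivity
  set M : ℝ := |(e - e ^ 2) * c ^ 2| with hM
  have hAbound : ∀ u : ℝ, 0 ≤ u → |AFun n σ a₀ a₁ u| ≤ M :=
    fun u hu => AFun_bound hσne ha₀.ne' hcpos hc he hu
  intro t ht
  obtain ⟨ht0, htT⟩ := ht
  set q : ℝ := p - 1 with hqdef
  have hq : 0 < q := by rw [hqdef]; linarith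
  have hsub : Icc (0:ℝ) t ⊆ Ico 0 T := fun s hs => ⟨hs.1, lt_of_le_of_lt hs.2 htT⟩
  have hYcont : ContinuousOn Y (Icc 0 t) :=
    fun s hs => ((hY1 s (hsub hs)).continuousWithinAt).mono hsub
  have hZcont : ContinuousOn Z (Icc 0 t) :=
    fun s hs => ((hZ1 s (hsub hs)).continuousWithinAt).mono hsub
  obtain ⟨RY, hRY⟩ := isCompact_Icc.exists_bound_of_continuousOn hYcont
  obtain ⟨RZ, hRZ⟩ := isCompact_Icc.exists_bound_of_continuousOn hZcont
  set R : ℝ := max RY RZ with hR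
  have h0mem : (0:ℝ) ∈ Icc (0:ℝ) t := mem_Icc.2 ⟨le_refl 0, ht0⟩
  have hR0 : 0 ≤ R :=
    (norm_nonneg (Y 0)).trans ((hRY 0 h0mem).trans (le_max_left _ _))
  set KF : ℝ := M + |lam| * ((1 + q) * R ^ q) with hKF
  have hRq : 0 ≤ R ^ q := Real.rpow_nonneg hR0 q
  have hKF0 : 0 ≤ KF :=
    add_nonneg (abs_nonneg _)
      (mul_nonneg (abs_nonneg _) (mul_nonneg (by linarith) hRq))
  set Kr : ℝ := max 1 KF with hKr
  set K : NNReal := Real.toNNReal Kr with hK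
  have hKco : (K : ℝ) = Kr := Real.coe_toNNReal _ (zero_le_one.trans (le_max_left _ _))
  set F : ℝ → EuclideanSpace ℝ (Fin n) → EuclideanSpace ℝ (Fin n) :=
    fun u x => -(AFun n σ a₀ a₁ u • x) - (lam * ‖x‖ ^ q) • x with hF
  set v : ℝ → EuclideanSpace ℝ (Fin n) × EuclideanSpace ℝ (Fin n) →
      EuclideanSpace ℝ (Fin n) × EuclideanSpace ℝ (Fin n) :=
    fun u w => (w.2, F (max 0 (min u t)) w.1) with hv
  set sset : ℝ → Set (EuclideanSpace ℝ (Fin n) × EuclideanSpace ℝ (Fin n)) :=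
    fun _ => closedBall 0 R ×ˢ univ with hsset
  have hlip : ∀ u, LipschitzOnWith K (v u) (sset u) := by
    intro u
    apply LipschitzOnWith.of_dist_le_mul
    rintro w hw w' hw'
    have hw1 : ‖w.1‖ ≤ R := mem_closedBall_zero_iff.1 hw.1
    have hw1' : ‖w'.1‖ ≤ R := mem_closedBall_zero_iff.1 hw'.1
    set τ : ℝ := max 0 (min u t) with hτdef
    have hτ : 0 ≤ τ := le_max_left _ _
    have hA := hAbound τ hτ
    have hd1 : dist w.1 w'.1 ≤ dist w w' := by rw [Prod.dist_eq]; exact le_max_left _ _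
    have hd2 : dist w.2 w'.2 ≤ dist w w' := by rw [Prod.dist_eq]; exact le_max_right _ _
    have hFd : dist (F τ w.1) (F τ w'.1) ≤ KF * dist w.1 w'.1 := by
      rw [dist_eq_norm, dist_eq_norm]
      have hrew : F τ w.1 - F τ w'.1
          = -(AFun n σ a₀ a₁ τ • (w.1 - w'.1))
            - lam • (‖w.1‖ ^ q • w.1 - ‖w'.1‖ ^ q • w'.1) := by
        simp only [hF]
        rw [show (lam * ‖w.1‖ ^ q) • w.1 = lam • (‖w.1‖ ^ q • w.1) from (smul_smul _ _ _).symm,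
          show (lam * ‖w'.1‖ ^ q) • w'.1 = lam • (‖w'.1‖ ^ q • w'.1) from (smul_smul _ _ _).symm]
        module
      rw [hrew]
      have hstep1 : ‖AFun n σ a₀ a₁ τ • (w.1 - w'.1)‖ ≤ M * ‖w.1 - w'.1‖ := by
        rw [norm_smul, Real.norm_eq_abs]
        exact mul_le_mul_of_nonneg_right hA (norm_nonneg _)
      have hstep2 : ‖lam • (‖w.1‖ ^ q • w.1 - ‖w'.1‖ ^ q • w'.1)‖
          ≤ |lam| * ((1 + q) * R ^ q * ‖w.1 - w'.1‖) := by
        rw [norm_smul, Real.norm_eq_abs]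
        exact mul_le_mul_of_nonneg_left
          (norm_rpow_smul_sub_le hq w.1 w'.1 hw1 hw1') (abs_nonneg _)
      calc ‖-(AFun n σ a₀ a₁ τ • (w.1 - w'.1))
            - lam • (‖w.1‖ ^ q • w.1 - ‖w'.1‖ ^ q • w'.1)‖
          ≤ ‖AFun n σ a₀ a₁ τ • (w.1 - w'.1)‖
            + ‖lam • (‖w.1‖ ^ q • w.1 - ‖w'.1‖ ^ q • w'.1)‖ := by
            rw [show -(AFun n σ a₀ a₁ τ • (w.1 - w'.1))
                - lam • (‖w.1‖ ^ q • w.1 - ‖w'.1‖ ^ q • w'.1)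
                = -((AFun n σ a₀ a₁ τ • (w.1 - w'.1))
                  + lam • (‖w.1‖ ^ q • w.1 - ‖w'.1‖ ^ q • w'.1)) from by module, norm_neg]
            exact norm_add_le _ _
        _ ≤ M * ‖w.1 - w'.1‖ + |lam| * ((1 + q) * R ^ q * ‖w.1 - w'.1‖) :=
            add_le_add hstep1 hstep2
        _ = KF * ‖w.1 - w'.1‖ := by rw [hKF]; ring
    calc dist (v u w) (v u w')
        = max (dist w.2 w'.2) (dist (F τ w.1) (F τ w'.1)) := Prod.dist_eq
      _ ≤ (K : ℝ) * dist w w' := by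
          rw [hKco]
          apply max_le
          · exact hd2.trans (le_mul_of_one_le_left dist_nonneg (le_max_left 1 KF))
          · exact hFd.trans (mul_le_mul (le_max_right 1 KF) hd1 dist_nonneg
              (zero_le_one.trans (le_max_left 1 KF)))
  have hmemIci : ∀ s ∈ Ico (0:ℝ) t, Ico (0:ℝ) T ∈ nhdsWithin s (Ici s) := by
    intro s hs
    refine mem_nhdsWithin.2 ⟨Iio T, isOpen_Iio, lt_of_lt_of_le (hs.2.trans_le htT.le) le_rfl, ?_⟩
    rintro x ⟨hx1, hx2⟩
    exact ⟨le_trans hs.1 hx2, hx1⟩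
  have hclamp : ∀ s ∈ Ico (0:ℝ) t, max 0 (min s t) = s := by
    intro s hs
    rw [min_eq_left hs.2.le, max_eq_right hs.1]
  have hf' : ∀ s ∈ Ico (0:ℝ) t,
      HasDerivWithinAt (fun u => (Y u, Y' u)) (v s (Y s, Y' s)) (Ici s) s := by
    intro s hs
    have hsT : s ∈ Ico (0:ℝ) T := ⟨hs.1, hs.2.trans htT⟩
    have h1 := (hY1 s hsT).mono_of_mem_nhdsWithin (hmemIci s hs)
    have h2 := (hY2 s hsT).mono_of_mem_nhdsWithin (hmemIci s hs)
    have := h1.prodMk h2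
    simpa [hv, hF, hclamp s hs] using this
  have hg' : ∀ s ∈ Ico (0:ℝ) t,
      HasDerivWithinAt (fun u => (Z u, Z' u)) (v s (Z s, Z' s)) (Ici s) s := by
    intro s hs
    have hsT : s ∈ Ico (0:ℝ) T := ⟨hs.1, hs.2.trans htT⟩
    have h1 := (hZ1 s hsT).mono_of_mem_nhdsWithin (hmemIci s hs)
    have h2 := (hZ2 s hsT).mono_of_mem_nhdsWithin (hmemIci s hs)
    have := h1.prodMk h2
    simpa [hv, hF, hclamp s hs] using this
  have hfs : ∀ s ∈ Ico (0:ℝ) t, (Y s, Y' s) ∈ sset s := by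
    intro s hs
    have : s ∈ Icc (0:ℝ) t := ⟨hs.1, hs.2.le⟩
    exact ⟨mem_closedBall_zero_iff.2 ((hRY s this).trans (le_max_left _ _)), mem_univ _⟩
  have hgs : ∀ s ∈ Ico (0:ℝ) t, (Z s, Z' s) ∈ sset s := by
    intro s hs
    have : s ∈ Icc (0:ℝ) t := ⟨hs.1, hs.2.le⟩
    exact ⟨mem_closedBall_zero_iff.2 ((hRZ s this).trans (le_max_right _ _)), mem_univ _⟩
  have hfcont : ContinuousOn (fun u => (Y u, Y' u)) (Icc (0:ℝ) t) :=
    hYcont.prodMk (hYc.mono hsub)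
  have hgcont : ContinuousOn (fun u => (Z u, Z' u)) (Icc (0:ℝ) t) :=
    hZcont.prodMk (hZc.mono hsub)
  have hinit : (fun u => (Y u, Y' u)) 0 = (fun u => (Z u, Z' u)) 0 := by
    simp [hY0, hZ0, hY'0, hZ'0]
  have := ODE_solution_unique_of_mem_Icc_right (fun u _ => hlip u) hfcont hf' hfs hgcont hg' hgs hinit
    (mem_Icc.2 ⟨ht0, le_refl t⟩)
  exact congrArg Prod.fst this
end

section
/- Assume a₁ > 0, σ > −1 + 2/n (case (i)) and λ ≥ 0. Then for any Y₀, Y₁ ∈ ℝⁿ the Cauchy problem D_t²Y(t) + A(t)Y(t) + λ|Y(t)|^{p−1}Y(t) = 0, Y(0) = Y₀, D_tY(0) = Y₁, has a global solution, i.e., a C¹ solution defined on the whole interval [0,∞). -/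
open MeasureTheory Set

theorem AFun_formula (n : ℕ) (hn : 1 ≤ n) (σ a₀ a₁ : ℝ)
    (ha₀ : 0 < a₀) (ha₁ : 0 < a₁) (hσ : -1 + 2 / (n : ℝ) < σ) :
    ∀ t : ℝ, 0 < 1 + ((n : ℝ) * (1 + σ) * a₁ / (2 * a₀)) * t →
      AFun n σ a₀ a₁ t = (2 / ((n : ℝ) * (1 + σ))) * (1 - 2 / ((n : ℝ) * (1 + σ)))
        * ((n : ℝ) * (1 + σ) * a₁ / (2 * a₀)) ^ 2
        * ((1 + ((n : ℝ) * (1 + σ) * a₁ / (2 * a₀)) * t)⁻¹) ^ 2 := by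
  have hn0 : (0 : ℝ) < n := by exact_mod_cast hn
  have hν : (2 : ℝ) < (n : ℝ) * (1 + σ) := by
    have h1 : 2 / (n : ℝ) < 1 + σ := by linarith
    calc (2:ℝ) = (n:ℝ) * (2 / (n:ℝ)) := by field_simp
    _ < (n:ℝ) * (1 + σ) := by exact (mul_lt_mul_iff_right₀ hn0).mpr h1
  have hσne : σ ≠ -1 := by
    have h2 : (0:ℝ) < 2 / (n:ℝ) := by positivity
    intro h; rw [h] at hσ; linarith
  set ν : ℝ := (n : ℝ) * (1 + σ) with hνdef
  have hν0 : 0 < ν := by linarith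
  set c : ℝ := ν * a₁ / (2 * a₀) with hcdef
  set e : ℝ := 2 / ν with hedef
  have hc0 : 0 < c := by positivity
  have he0 : 0 < e := by positivity
  have he1 : e < 1 := by rw [hedef, div_lt_one hν0]; exact hν
  have hscale : ∀ s : ℝ, scaleFun n σ a₀ a₁ s = a₀ * (1 + c * s) ^ e := by
    intro s
    rw [scaleFun, if_neg hσne]
    congr 2
    rw [hcdef, hνdef]; ring
  intro t ht
  set U : Set ℝ := {s | 0 < 1 + c * s} with hUdef
  have hUopen : IsOpen U := by
    have : U = (fun s => 1 + c * s) ⁻¹' (Ioi 0) := rfl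
    rw [this]; exact (isOpen_Ioi).preimage (by continuity)
  have htU : t ∈ U := ht
  have hUnhds : ∀ s ∈ U, U ∈ nhds s := fun s hs => hUopen.mem_nhds hs
  have hbase : ∀ s : ℝ, HasDerivAt (fun u => 1 + c * u) c s := by
    intro s
    simpa using ((hasDerivAt_id s).const_mul c).const_add 1
  have hsq_deriv : ∀ s ∈ U, HasDerivAt (fun u => (scaleFun n σ a₀ a₁ u) ^ 2)
      (a₀ ^ 2 * (c * (2 * e) * (1 + c * s) ^ (2 * e - 1))) s := by
    intro s hs
    have h1 : HasDerivAt (fun u => (1 + c * u) ^ (2 * e))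
        (c * (2 * e) * (1 + c * s) ^ (2 * e - 1)) s :=
      (hbase s).rpow_const (Or.inl (ne_of_gt hs))
    have h2 := h1.const_mul (a₀ ^ 2)
    apply h2.congr_of_eventuallyEq
    filter_upwards [hUnhds s hs] with u hu
    rw [hscale u, mul_pow, ← Real.rpow_natCast ((1 + c*u) ^ e) 2, ← Real.rpow_mul (le_of_lt hu)]
    norm_num [mul_comm]
  have hq0 : ∀ s ∈ U, q0Fun n σ a₀ a₁ s = 2 * e * c * (1 + c * s)⁻¹ := by
    intro s hs
    have hx : (0:ℝ) < 1 + c * s := hs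
    have hxe : (0:ℝ) < (1 + c * s) ^ e := Real.rpow_pos_of_pos hx e
    rw [q0Fun, (hsq_deriv s hs).deriv, hscale s]
    have key : (1 + c*s) ^ (2*e - 1) = (1+c*s)^e * ((1+c*s)^e * (1+c*s)⁻¹) := by
      rw [← Real.rpow_neg_one (1+c*s), ← Real.rpow_add hx, ← Real.rpow_add hx]; ring_nf
    rw [key, mul_pow, pow_two ((1+c*s)^e)]
    field_simp
  have hq0' : deriv (q0Fun n σ a₀ a₁) t = 2 * e * c * (-c / (1 + c * t) ^ 2) := by
    have heq : q0Fun n σ a₀ a₁ =ᶠ[nhds t] (fun s => 2 * e * c * (1 + c * s)⁻¹) := by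
      filter_upwards [hUnhds t htU] with s hs using hq0 s hs
    rw [heq.deriv_eq]
    have h1 : HasDerivAt (fun s => (1 + c * s)⁻¹) (-c / (1 + c * t) ^ 2) t :=
      (hbase t).inv (ne_of_gt ht)
    exact (h1.const_mul (2 * e * c)).deriv
  rw [AFun, hq0 t htU, hq0']
  have h2 : (1 + c * t) ≠ 0 := ne_of_gt ht
  field_simp
  ring


-- scalar helper
theorem rpow_sub_rpow_mul_le {q r s R : ℝ} (hq : 0 < q) (h0 : 0 ≤ r) (hrs : r ≤ s) (hsR : s ≤ R) :
    (s ^ q - r ^ q) * r ≤ q * R ^ q * (s - r) := by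
  rcases eq_or_lt_of_le hrs with h | h
  · subst h; simp
  have hR0 : 0 < R := lt_of_le_of_lt h0 (lt_of_lt_of_le h hsR)
  have hcont : ContinuousOn (fun x : ℝ => x ^ q) (Icc r s) := by
    intro x _
    exact (Real.continuousAt_rpow_const x q (Or.inr (le_of_lt hq))).continuousWithinAt
  have hderiv : ∀ x ∈ Ioo r s, HasDerivAt (fun x : ℝ => x ^ q) (q * x ^ (q - 1)) x := by
    intro x hx
    have hx0 : 0 < x := lt_of_le_of_lt h0 hx.1
    exact Real.hasDerivAt_rpow_const (Or.inl (ne_of_gt hx0))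
  obtain ⟨ξ, hξ, hslope⟩ := exists_hasDerivAt_eq_slope (fun x : ℝ => x ^ q)
    (fun x => q * x ^ (q - 1)) h hcont hderiv
  have hξ0 : 0 < ξ := lt_of_le_of_lt h0 hξ.1
  have hkey : s ^ q - r ^ q = q * ξ ^ (q - 1) * (s - r) := by
    rw [eq_div_iff (by intro hc; rw [sub_eq_zero] at hc; exact (ne_of_lt h) hc.symm : s - r ≠ 0)] at hslope
    linarith [hslope]
  rw [hkey]
  have hmain : ξ ^ (q - 1) * r ≤ R ^ q := by
    rcases le_or_gt 1 q with hq1 | hq1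
    · have h1 : ξ ^ (q - 1) ≤ R ^ (q - 1) :=
        Real.rpow_le_rpow (le_of_lt hξ0) (le_of_lt (lt_of_lt_of_le hξ.2 hsR)) (by linarith)
      calc ξ ^ (q - 1) * r ≤ R ^ (q - 1) * R := by
            apply mul_le_mul h1 (le_trans hrs hsR) h0 (Real.rpow_nonneg (le_of_lt hR0) _)
      _ = R ^ q := by
            rw [← Real.rpow_add_one (ne_of_gt hR0)]; ring_nf
    · rcases eq_or_lt_of_le h0 with hr0 | hr0
      · rw [← hr0]; simp; positivity
      · have h1 : ξ ^ (q - 1) ≤ r ^ (q - 1) :=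
          Real.rpow_le_rpow_of_nonpos hr0 (le_of_lt hξ.1) (by linarith)
        calc ξ ^ (q - 1) * r ≤ r ^ (q - 1) * r := by
              apply mul_le_mul_of_nonneg_right h1 h0
        _ = r ^ q := by rw [← Real.rpow_add_one (ne_of_gt hr0)]; ring_nf
        _ ≤ R ^ q := Real.rpow_le_rpow h0 (le_trans hrs hsR) (le_of_lt hq)
  calc q * ξ ^ (q - 1) * (s - r) * r = (ξ ^ (q - 1) * r) * (q * (s - r)) := by ring
  _ ≤ R ^ q * (q * (s - r)) := by
      apply mul_le_mul_of_nonneg_right hmain (by nlinarith)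
  _ = q * R ^ q * (s - r) := by ring

section lip
variable {E : Type*} [NormedAddCommGroup E] [NormedSpace ℝ E]

theorem nonlin_lip_aux {q R : ℝ} (hq : 0 < q) (x y : E) (hx : ‖x‖ ≤ R) (hy : ‖y‖ ≤ R)
    (hxy : ‖x‖ ≤ ‖y‖) :
    ‖‖y‖ ^ q • y - ‖x‖ ^ q • x‖ ≤ (1 + q) * R ^ q * ‖y - x‖ := by
  have hR0 : 0 ≤ R := le_trans (norm_nonneg y) hy
  have hsplit : ‖y‖ ^ q • y - ‖x‖ ^ q • x
      = ‖y‖ ^ q • (y - x) + (‖y‖ ^ q - ‖x‖ ^ q) • x := by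
    rw [smul_sub, sub_smul]; abel
  rw [hsplit]
  have h1 : ‖(‖y‖ ^ q : ℝ) • (y - x)‖ ≤ R ^ q * ‖y - x‖ := by
    rw [norm_smul, Real.norm_eq_abs, abs_of_nonneg (Real.rpow_nonneg (norm_nonneg y) q)]
    exact mul_le_mul_of_nonneg_right (Real.rpow_le_rpow (norm_nonneg y) hy (le_of_lt hq))
      (norm_nonneg _)
  have h2 : ‖((‖y‖ ^ q - ‖x‖ ^ q : ℝ)) • x‖ ≤ q * R ^ q * ‖y - x‖ := by
    rw [norm_smul, Real.norm_eq_abs,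
      abs_of_nonneg (by linarith [Real.rpow_le_rpow (norm_nonneg x) hxy (le_of_lt hq)])]
    calc (‖y‖ ^ q - ‖x‖ ^ q) * ‖x‖ ≤ q * R ^ q * (‖y‖ - ‖x‖) :=
          rpow_sub_rpow_mul_le hq (norm_nonneg x) hxy hy
    _ ≤ q * R ^ q * ‖y - x‖ := by
        apply mul_le_mul_of_nonneg_left (norm_sub_norm_le y x) (by positivity)
  calc ‖(‖y‖ ^ q : ℝ) • (y - x) + ((‖y‖ ^ q - ‖x‖ ^ q : ℝ)) • x‖
      ≤ ‖(‖y‖ ^ q : ℝ) • (y - x)‖ + ‖((‖y‖ ^ q - ‖x‖ ^ q : ℝ)) • x‖ := norm_add_le _ _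
  _ ≤ R ^ q * ‖y - x‖ + q * R ^ q * ‖y - x‖ := add_le_add h1 h2
  _ = (1 + q) * R ^ q * ‖y - x‖ := by ring

theorem nonlin_lip {q R : ℝ} (hq : 0 < q) (x y : E) (hx : ‖x‖ ≤ R) (hy : ‖y‖ ≤ R) :
    ‖‖y‖ ^ q • y - ‖x‖ ^ q • x‖ ≤ (1 + q) * R ^ q * ‖y - x‖ := by
  rcases le_total ‖x‖ ‖y‖ with h | h
  · exact nonlin_lip_aux hq x y hx hy h
  · rw [norm_sub_rev, norm_sub_rev y x]
    exact nonlin_lip_aux hq y x hy hx h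

end lip

section vf
variable {E : Type*} [NormedAddCommGroup E] [NormedSpace ℝ E]

/-- first-order system vector field -/
noncomputable def vfield (A : ℝ → ℝ) (lam p : ℝ) (t : ℝ) (z : E × E) : E × E :=
  (z.2, -(A t • z.1) - (lam * ‖z.1‖ ^ (p - 1)) • z.1)

theorem hasDerivWithinAt_fst {f : ℝ → E × E} {d : E × E} {s : Set ℝ} {x : ℝ}
    (h : HasDerivWithinAt f d s x) : HasDerivWithinAt (fun t => (f t).1) d.1 s x := by
  have h1 := (ContinuousLinearMap.fst ℝ E E).hasFDerivAt.comp_hasDerivWithinAt x h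
  exact h1

theorem hasDerivWithinAt_snd {f : ℝ → E × E} {d : E × E} {s : Set ℝ} {x : ℝ}
    (h : HasDerivWithinAt f d s x) : HasDerivWithinAt (fun t => (f t).2) d.2 s x := by
  have h1 := (ContinuousLinearMap.snd ℝ E E).hasFDerivAt.comp_hasDerivWithinAt x h
  exact h1

variable {A : ℝ → ℝ} {M lam p : ℝ}

theorem vfield_lipschitzOnWith (hM : 0 ≤ M) (hlam : 0 ≤ lam) (hp : 1 < p)
    {t : ℝ} (hA : |A t| ≤ M) {ρ : ℝ} (hρ : 0 ≤ ρ) :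
    LipschitzOnWith (Real.toNNReal (1 + M + lam * p * ρ ^ (p - 1)))
      (vfield A lam p t (E := E)) (Metric.closedBall 0 ρ) := by
  have hq : 0 < p - 1 := by linarith
  rw [lipschitzOnWith_iff_dist_le_mul]
  intro z hz z' hz'
  rw [Metric.mem_closedBall, dist_zero_right] at hz hz'
  have hz1 : ‖z.1‖ ≤ ρ := le_trans (norm_fst_le z) hz
  have hz'1 : ‖z'.1‖ ≤ ρ := le_trans (norm_fst_le z') hz'
  rw [dist_eq_norm, dist_eq_norm]
  have hKnn : (0:ℝ) ≤ 1 + M + lam * p * ρ ^ (p-1) := by positivity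
  rw [Real.coe_toNNReal _ hKnn]
  have hsub : vfield A lam p t z - vfield A lam p t z'
      = (z.2 - z'.2, -(A t • (z.1 - z'.1))
          - (lam • (‖z.1‖ ^ (p-1) • z.1) - lam • (‖z'.1‖ ^ (p-1) • z'.1))) := by
    rw [vfield, vfield, Prod.mk_sub_mk]
    congr 1
    rw [smul_smul, smul_smul, smul_sub]
    abel
  rw [hsub, Prod.norm_def]
  have h1 : ‖z.2 - z'.2‖ ≤ ‖z - z'‖ := by simpa using norm_snd_le (z - z')
  have hd1 : ‖z.1 - z'.1‖ ≤ ‖z - z'‖ := by simpa using norm_fst_le (z - z')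
  have h2 : ‖-(A t • (z.1 - z'.1))
      - (lam • (‖z.1‖ ^ (p-1) • z.1) - lam • (‖z'.1‖ ^ (p-1) • z'.1))‖
      ≤ (M + lam * p * ρ ^ (p-1)) * ‖z - z'‖ := by
    calc ‖-(A t • (z.1 - z'.1))
        - (lam • (‖z.1‖ ^ (p-1) • z.1) - lam • (‖z'.1‖ ^ (p-1) • z'.1))‖
        ≤ ‖A t • (z.1 - z'.1)‖ + ‖lam • (‖z.1‖ ^ (p-1) • z.1 - ‖z'.1‖ ^ (p-1) • z'.1)‖ := by
          rw [← smul_sub lam]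
          exact (norm_sub_le _ _).trans (by rw [norm_neg])
    _ ≤ M * ‖z - z'‖ + lam * ((1 + (p-1)) * ρ ^ (p-1) * ‖z.1 - z'.1‖) := by
        apply add_le_add
        · rw [norm_smul, Real.norm_eq_abs]
          exact mul_le_mul hA hd1 (norm_nonneg _) hM
        · rw [norm_smul, Real.norm_eq_abs, abs_of_nonneg hlam]
          exact mul_le_mul_of_nonneg_left (nonlin_lip hq z'.1 z.1 hz'1 hz1) hlam
    _ ≤ M * ‖z - z'‖ + lam * ((1 + (p-1)) * ρ ^ (p-1) * ‖z - z'‖) := by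
        apply add_le_add le_rfl
        apply mul_le_mul_of_nonneg_left _ hlam
        apply mul_le_mul_of_nonneg_left hd1 (by positivity)
    _ = (M + lam * p * ρ ^ (p-1)) * ‖z - z'‖ := by ring
  apply max_le
  · calc ‖z.2 - z'.2‖ ≤ 1 * ‖z - z'‖ := by linarith
    _ ≤ (1 + M + lam * p * ρ ^ (p-1)) * ‖z - z'‖ := by
        apply mul_le_mul_of_nonneg_right _ (norm_nonneg _)
        have hx : (0:ℝ) ≤ lam * p * ρ ^ (p-1) := by positivity
        linarith
  · calc _ ≤ (M + lam * p * ρ ^ (p-1)) * ‖z - z'‖ := h2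
    _ ≤ (1 + M + lam * p * ρ ^ (p-1)) * ‖z - z'‖ := by
        apply mul_le_mul_of_nonneg_right _ (norm_nonneg _); linarith

theorem vfield_norm_le (hM : 0 ≤ M) (hlam : 0 ≤ lam) (hp : 1 < p)
    {t : ℝ} (hA : |A t| ≤ M) {ρ : ℝ} (hρ : 0 ≤ ρ) {z : E × E} (hz : ‖z‖ ≤ ρ) :
    ‖vfield A lam p t z‖ ≤ ρ + M * ρ + lam * ρ ^ p := by
  have hz1 : ‖z.1‖ ≤ ρ := le_trans (norm_fst_le z) hz
  have hz2 : ‖z.2‖ ≤ ρ := le_trans (norm_snd_le z) hz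
  rw [vfield, Prod.norm_def]
  apply max_le
  · simp only []; nlinarith [Real.rpow_nonneg hρ p]
  · calc ‖-(A t • z.1) - (lam * ‖z.1‖ ^ (p-1)) • z.1‖
        ≤ ‖A t • z.1‖ + ‖(lam * ‖z.1‖ ^ (p-1)) • z.1‖ :=
          (norm_sub_le _ _).trans (by rw [norm_neg])
    _ ≤ M * ρ + lam * ρ ^ p := by
        apply add_le_add
        · rw [norm_smul, Real.norm_eq_abs]
          exact mul_le_mul hA hz1 (norm_nonneg _) hM
        · rw [norm_smul, Real.norm_eq_abs,
            abs_of_nonneg (by positivity : (0:ℝ) ≤ lam * ‖z.1‖ ^ (p-1))]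
          calc lam * ‖z.1‖ ^ (p-1) * ‖z.1‖ ≤ lam * ρ ^ (p-1) * ρ := by
                apply mul_le_mul _ hz1 (norm_nonneg _) (by positivity)
                exact mul_le_mul_of_nonneg_left
                  (Real.rpow_le_rpow (norm_nonneg _) hz1 (by linarith)) hlam
          _ = lam * ρ ^ p := by
              rcases eq_or_lt_of_le hρ with h | h
              · rw [← h, Real.zero_rpow (show p ≠ 0 by linarith)]; ring
              · rw [mul_assoc, ← Real.rpow_add_one (ne_of_gt h)]; ring_nf
    _ ≤ ρ + M * ρ + lam * ρ ^ p := by linarith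

theorem vfield_contOn (hAc : ContinuousOn A (Ici 0)) {s : Set ℝ} (hs : s ⊆ Ici 0) (x : E × E) :
    ContinuousOn (fun t => vfield A lam p t x) s := by
  apply ContinuousOn.prodMk continuousOn_const
  apply ContinuousOn.sub
  · exact (((hAc.mono hs).smul continuousOn_const)).neg
  · exact continuousOn_const

end vf

section apriori
open scoped RealInnerProductSpace
open Set
variable {E : Type*} [NormedAddCommGroup E] [InnerProductSpace ℝ E]
variable {A : ℝ → ℝ} {M lam p : ℝ}

/-- energy functional initial value -/
noncomputable def en0 (lam p : ℝ) (z₀ : E × E) : ℝ :=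
  ⟪z₀.1, z₀.1⟫ + ⟪z₀.2, z₀.2⟫ + (2 * lam / (p + 1)) * ⟪z₀.1, z₀.1⟫ ^ ((p + 1) / 2)

theorem en0_nonneg (hlam : 0 ≤ lam) (hp : 1 < p) (z₀ : E × E) : 0 ≤ en0 lam p z₀ := by
  have h1 := real_inner_self_nonneg (x := z₀.1)
  have h2 := real_inner_self_nonneg (x := z₀.2)
  have hp1 : (0:ℝ) < p + 1 := by linarith
  have h3 : (0:ℝ) ≤ (2 * lam / (p + 1)) * ⟪z₀.1, z₀.1⟫ ^ ((p + 1) / 2) :=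
    mul_nonneg (by positivity) (Real.rpow_nonneg h1 _)
  rw [en0]; linarith

set_option maxHeartbeats 1000000 in
theorem apriori_bound (hM : 0 ≤ M) (hA : ∀ t ∈ Set.Ici (0:ℝ), |A t| ≤ M)
    (hlam : 0 ≤ lam) (hp : 1 < p) {T : ℝ} (hT : 0 ≤ T) {z : ℝ → E × E}
    (hz : ∀ t ∈ Set.Icc 0 T, HasDerivWithinAt z (vfield A lam p t (z t)) (Set.Icc 0 T) t) :
    ∀ t ∈ Set.Icc 0 T, ‖z t‖ ≤ Real.sqrt (en0 lam p (z 0) * Real.exp ((1 + M) * T)) := by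
  have hp1 : (0:ℝ) < p + 1 := by linarith
  set κ : ℝ := (p + 1) / 2 with hκ
  have hκ1 : (1:ℝ) ≤ κ := by rw [hκ]; linarith
  set c₃ : ℝ := 2 * lam / (p + 1) with hc₃
  have hc₃0 : 0 ≤ c₃ := by positivity
  have hck : c₃ * κ = lam := by rw [hc₃, hκ]; field_simp
  set y : ℝ → E := fun t => (z t).1 with hydef
  set w : ℝ → E := fun t => (z t).2 with hwdef
  set G : ℝ → ℝ := fun t => ⟪y t, y t⟫ + ⟪w t, w t⟫ + c₃ * ⟪y t, y t⟫ ^ κ with hGdef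
  set G' : ℝ → ℝ := fun t => (2 - 2 * A t) * ⟪y t, w t⟫ with hG'def
  have hnorm_eq : ∀ t : ℝ, (⟪y t, y t⟫ : ℝ) ^ (κ - 1) = ‖y t‖ ^ (p - 1) := by
    intro t
    rw [real_inner_self_eq_norm_sq, ← Real.rpow_natCast ‖y t‖ 2,
      ← Real.rpow_mul (norm_nonneg _)]
    congr 1
    push_cast
    rw [hκ]; ring
  have hG : ∀ t ∈ Set.Icc 0 T, HasDerivWithinAt G (G' t) (Set.Icc 0 T) t := by
    intro t ht
    have hy : HasDerivWithinAt y (w t) (Set.Icc 0 T) t := hasDerivWithinAt_fst (hz t ht)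
    have hw : HasDerivWithinAt w
        (-(A t • y t) - (lam * ‖y t‖ ^ (p - 1)) • y t) (Set.Icc 0 T) t :=
      hasDerivWithinAt_snd (hz t ht)
    have h1 := HasDerivWithinAt.inner ℝ hy hy
    have h2 := HasDerivWithinAt.inner ℝ hw hw
    have h3 := (HasDerivWithinAt.inner ℝ hy hy).rpow_const (Or.inr hκ1)
    have h4 := (h1.add h2).add (h3.const_mul c₃)
    show HasDerivWithinAt G ((2 - 2 * A t) * ⟪y t, w t⟫) (Set.Icc 0 T) t
    refine h4.congr_deriv ?_
    symm
    have hcomm : ⟪w t, y t⟫ = ⟪y t, w t⟫ := real_inner_comm _ _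
    have hDw : ⟪-(A t • y t) - (lam * ‖y t‖ ^ (p - 1)) • y t, w t⟫
        = ⟪w t, -(A t • y t) - (lam * ‖y t‖ ^ (p - 1)) • y t⟫ := real_inner_comm _ _
    have e2 : ⟪w t, -(A t • y t) - (lam * ‖y t‖ ^ (p - 1)) • y t⟫
        = -(A t * ⟪y t, w t⟫) - lam * ‖y t‖ ^ (p - 1) * ⟪y t, w t⟫ := by
      rw [inner_sub_right, inner_neg_right, real_inner_smul_right, real_inner_smul_right,
        real_inner_comm (w t) (y t)]
    rw [hDw, e2, hcomm, hnorm_eq t]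
    linear_combination (-(2 * ⟪y t, w t⟫ * ‖y t‖ ^ (p - 1))) * hck
  have hGc : ContinuousOn G (Set.Icc 0 T) := fun t ht => (hG t ht).continuousWithinAt
  have hbound : ∀ x ∈ Set.Ico 0 T, G' x ≤ (1 + M) * G x + 0 := by
    intro x hx
    have hAx := hA x (mem_Ici.mpr hx.1)
    have hAle := abs_le.mp hAx
    have hIle := abs_le.mp (abs_real_inner_le_norm (y x) (w x))
    have hy2 : ⟪y x, y x⟫ = ‖y x‖ ^ 2 := real_inner_self_eq_norm_sq _
    have hw2 : ⟪w x, w x⟫ = ‖w x‖ ^ 2 := real_inner_self_eq_norm_sq _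
    have hGge : ‖y x‖ ^ 2 + ‖w x‖ ^ 2 ≤ G x := by
      have hGx : G x = ‖y x‖ ^ 2 + ‖w x‖ ^ 2 + c₃ * ((‖y x‖ ^ 2 : ℝ)) ^ κ := by
        rw [hGdef]; simp only []; rw [hy2, hw2]
      have hpos2 : (0:ℝ) ≤ c₃ * ((‖y x‖ ^ 2 : ℝ)) ^ κ :=
        mul_nonneg hc₃0 (Real.rpow_nonneg (sq_nonneg _) _)
      rw [hGx]; linarith
    have h1 : G' x ≤ (2 + 2 * M) * (‖y x‖ * ‖w x‖) := by
      rw [hG'def]; simp only []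
      nlinarith [norm_nonneg (y x), norm_nonneg (w x),
        mul_nonneg (norm_nonneg (y x)) (norm_nonneg (w x))]
    have h2 : (2 + 2 * M) * (‖y x‖ * ‖w x‖) ≤ (1 + M) * (‖y x‖ ^ 2 + ‖w x‖ ^ 2) := by
      nlinarith [sq_nonneg (‖y x‖ - ‖w x‖)]
    have h3 : (1 + M) * (‖y x‖ ^ 2 + ‖w x‖ ^ 2) ≤ (1 + M) * G x :=
      mul_le_mul_of_nonneg_left hGge (by linarith)
    linarith
  have hslope : ∀ x ∈ Set.Ico 0 T, ∀ r : ℝ, G' x < r →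
      ∃ᶠ z in nhdsWithin x (Set.Ioi x), (z - x)⁻¹ * (G z - G x) < r := by
    intro x hx r hr
    exact ((hG x (Ico_subset_Icc_self hx)).mono_of_mem_nhdsWithin
      (Icc_mem_nhdsGE_of_mem hx)).liminf_right_slope_le hr
  have hGr := le_gronwallBound_of_liminf_deriv_right_le hGc hslope (le_refl (G 0)) hbound
  have hG0 : G 0 = en0 lam p (z 0) := by rw [hGdef, en0]
  intro t ht
  have h1 : G t ≤ G 0 * Real.exp ((1 + M) * (t - 0)) := by
    have := hGr t ht
    rwa [gronwallBound_ε0] at this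
  have hδ0 : 0 ≤ G 0 := by rw [hG0]; exact en0_nonneg hlam hp _
  have h2 : G t ≤ en0 lam p (z 0) * Real.exp ((1 + M) * T) := by
    rw [← hG0]
    refine le_trans h1 (mul_le_mul_of_nonneg_left (Real.exp_le_exp.mpr ?_) hδ0)
    have := ht.2
    nlinarith
  have hzG : ‖z t‖ ^ 2 ≤ G t := by
    have hy2 : ⟪y t, y t⟫ = ‖y t‖ ^ 2 := real_inner_self_eq_norm_sq _
    have hw2 : ⟪w t, w t⟫ = ‖w t‖ ^ 2 := real_inner_self_eq_norm_sq _
    have hGx : G t = ‖y t‖ ^ 2 + ‖w t‖ ^ 2 + c₃ * ((‖y t‖ ^ 2 : ℝ)) ^ κ := by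
      rw [hGdef]; simp only []; rw [hy2, hw2]
    have hpos2 : (0:ℝ) ≤ c₃ * ((‖y t‖ ^ 2 : ℝ)) ^ κ :=
      mul_nonneg hc₃0 (Real.rpow_nonneg (sq_nonneg _) _)
    have hzn : ‖z t‖ = max ‖y t‖ ‖w t‖ := Prod.norm_def _
    have hmax : (max ‖y t‖ ‖w t‖) ^ 2 ≤ ‖y t‖ ^ 2 + ‖w t‖ ^ 2 := by
      rcases max_choice ‖y t‖ ‖w t‖ with h | h <;> rw [h]
      · linarith [sq_nonneg ‖w t‖]
      · linarith [sq_nonneg ‖y t‖]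
    rw [hzn, hGx]
    linarith [hpos2, hmax]
  rw [Real.le_sqrt (norm_nonneg _) (mul_nonneg (en0_nonneg hlam hp _) (Real.exp_nonneg _))]
  exact le_trans hzG h2
end apriori

section exist
open Set
variable {E : Type*} [NormedAddCommGroup E] [InnerProductSpace ℝ E] [CompleteSpace E]
variable {A : ℝ → ℝ} {M lam p : ℝ}

/-- uniform local time step -/
noncomputable def lstep (M lam p B : ℝ) : ℝ :=
  1 / ((B + 1) + M * (B + 1) + lam * (B + 1) ^ p + 1)

theorem lstep_pos (hM : 0 ≤ M) (hlam : 0 ≤ lam) {B : ℝ} (hB : 0 ≤ B) :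
    0 < lstep M lam p B := by
  have h1 : (0:ℝ) ≤ lam * (B + 1) ^ p := by
    apply mul_nonneg hlam (Real.rpow_nonneg (by linarith) _)
  have h2 : (0:ℝ) ≤ M * (B + 1) := by positivity
  rw [lstep]; positivity

theorem hasDerivWithinAt_singleton (f : ℝ → E × E) (x : ℝ) (d : E × E) :
    HasDerivWithinAt f d {x} x := by
  rw [hasDerivWithinAt_iff_tendsto_slope, diff_self, nhdsWithin_empty]
  exact Filter.tendsto_bot

theorem local_exist (hM : 0 ≤ M) (hA : ∀ t ∈ Ici (0:ℝ), |A t| ≤ M)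
    (hAc : ContinuousOn A (Ici 0)) (hlam : 0 ≤ lam) (hp : 1 < p)
    {B : ℝ} (hB : 0 ≤ B) {T : ℝ} (hT : 0 ≤ T) {x₀ : E × E} (hx₀ : ‖x₀‖ ≤ B) :
    ∃ f : ℝ → E × E, f T = x₀ ∧ ∀ t ∈ Icc T (T + lstep M lam p B),
      HasDerivWithinAt f (vfield A lam p t (f t)) (Icc T (T + lstep M lam p B)) t := by
  set ρ : ℝ := B + 1 with hρdef
  have hρ0 : (0:ℝ) ≤ ρ := by linarith
  set C : ℝ := ρ + M * ρ + lam * ρ ^ p with hCdef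
  have hC0 : (0:ℝ) ≤ C := by
    have h1 : (0:ℝ) ≤ lam * ρ ^ p := mul_nonneg hlam (Real.rpow_nonneg hρ0 _)
    have h2 : (0:ℝ) ≤ M * ρ := by positivity
    rw [hCdef]; linarith
  have hδeq : lstep M lam p B = 1 / (C + 1) := by rw [hCdef, hρdef]; rfl
  set δ : ℝ := lstep M lam p B with hδdef
  have hδ0 : 0 < δ := lstep_pos hM hlam hB
  have hsub : Metric.closedBall x₀ 1 ⊆ Metric.closedBall (0 : E × E) ρ := by
    intro u hu
    rw [Metric.mem_closedBall, dist_zero_right]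
    rw [Metric.mem_closedBall] at hu
    calc ‖u‖ = ‖x₀ + (u - x₀)‖ := by congr 1; abel
    _ ≤ ‖x₀‖ + ‖u - x₀‖ := norm_add_le _ _
    _ ≤ B + 1 := by
        rw [dist_eq_norm] at hu; linarith
  have hIci : Icc T (T + δ) ⊆ Ici (0:ℝ) := fun u hu => le_trans hT hu.1
  have hpl : IsPicardLindelof (vfield A lam p) (tmin := T) (tmax := T + δ)
      ⟨T, le_refl T, by linarith⟩ x₀ 1 0 (Real.toNNReal C)
      (Real.toNNReal (1 + M + lam * p * ρ ^ (p - 1))) := by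
    constructor
    · intro t ht
      exact (vfield_lipschitzOnWith hM hlam hp (hA t (hIci ht)) hρ0).mono hsub
    · intro x _
      exact vfield_contOn hAc hIci x
    · intro t ht x hx
      rw [Real.coe_toNNReal _ hC0]
      apply vfield_norm_le hM hlam hp (hA t (hIci ht)) hρ0
      have := hsub hx
      rwa [Metric.mem_closedBall, dist_zero_right] at this
    · have hmax : max (T + δ - T) (T - T) = δ := by
        rw [max_eq_left (by linarith)]; ring
      show ((Real.toNNReal C : ℝ)) * max (T + δ - T) (T - T) ≤ ((1:NNReal):ℝ) - ((0:NNReal):ℝ)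
      rw [hmax, hδeq, Real.coe_toNNReal _ hC0, NNReal.coe_one, NNReal.coe_zero, sub_zero]
      have heq2 : C * (1 / (C + 1)) = C / (C + 1) := by ring
      rw [heq2, div_le_one (by linarith)]
      linarith
  obtain ⟨f, hf0, hf⟩ := hpl.exists_eq_forall_mem_Icc_hasDerivWithinAt
    (Metric.mem_closedBall_self (le_refl _))
  exact ⟨f, hf0, hf⟩

end exist

section glue
open Set Filter
variable {E : Type*} [NormedAddCommGroup E] [InnerProductSpace ℝ E] [CompleteSpace E]
variable {A : ℝ → ℝ} {M lam p : ℝ}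

theorem glue_sol {v : ℝ → (E × E) → (E × E)} {T T₂ : ℝ} (hT : 0 ≤ T) (hTT : T ≤ T₂)
    {z₁ z₂ : ℝ → E × E}
    (h₁ : ∀ t ∈ Icc 0 T, HasDerivWithinAt z₁ (v t (z₁ t)) (Icc 0 T) t)
    (h₂ : ∀ t ∈ Icc T T₂, HasDerivWithinAt z₂ (v t (z₂ t)) (Icc T T₂) t)
    (hmatch : z₂ T = z₁ T) :
    ∃ z : ℝ → E × E, z 0 = z₁ 0 ∧
      ∀ t ∈ Icc 0 T₂, HasDerivWithinAt z (v t (z t)) (Icc 0 T₂) t := by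
  classical
  refine ⟨fun t => if t ≤ T then z₁ t else z₂ t, by simp [hT], ?_⟩
  set z : ℝ → E × E := fun t => if t ≤ T then z₁ t else z₂ t with hzdef
  have hz₁eq : EqOn z z₁ (Icc 0 T) := fun u hu => if_pos hu.2
  have hz₂eq : EqOn z z₂ (Icc T T₂) := by
    intro u hu
    by_cases h : u ≤ T
    · have : u = T := le_antisymm h hu.1
      subst this
      rw [hzdef]; simp only [if_pos (le_refl u)]; exact hmatch.symm
    · exact if_neg h
  intro t ht
  rcases lt_trichotomy t T with h | h | h
  · have hmem : Icc 0 T ∈ nhdsWithin t (Icc 0 T₂) := by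
      apply mem_nhdsWithin.mpr
      exact ⟨Iio T, isOpen_Iio, h, fun u hu => ⟨hu.2.1, le_of_lt hu.1⟩⟩
    have hd := (h₁ t ⟨ht.1, le_of_lt h⟩).mono_of_mem_nhdsWithin hmem
    have hev : z =ᶠ[nhdsWithin t (Icc 0 T₂)] z₁ := by
      have hIic : Iic T ∈ nhdsWithin t (Icc 0 T₂) :=
        mem_nhdsWithin_of_mem_nhds (Iic_mem_nhds h)
      filter_upwards [hIic] with u hu
      exact if_pos hu
    have hzt : z t = z₁ t := if_pos (le_of_lt h)
    have := hd.congr_of_eventuallyEq hev hzt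
    rwa [← hzt] at this
  · subst h
    have hd₁ : HasDerivWithinAt z (v t (z₁ t)) (Icc 0 t) t :=
      (h₁ t ⟨ht.1, le_refl t⟩).congr hz₁eq (hz₁eq ⟨ht.1, le_refl t⟩)
    have hd₂ : HasDerivWithinAt z (v t (z₁ t)) (Icc t T₂) t := by
      have := (h₂ t ⟨le_refl t, hTT⟩).congr hz₂eq (hz₂eq ⟨le_refl t, hTT⟩)
      rwa [hmatch] at this
    have hu := hd₁.union hd₂
    rw [Icc_union_Icc_eq_Icc ht.1 hTT] at hu
    have hzt : z t = z₁ t := if_pos (le_refl t)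
    rwa [← hzt] at hu
  · have hmem : Icc T T₂ ∈ nhdsWithin t (Icc 0 T₂) := by
      apply mem_nhdsWithin.mpr
      exact ⟨Ioi T, isOpen_Ioi, h, fun u hu => ⟨le_of_lt hu.1, hu.2.2⟩⟩
    have hd := (h₂ t ⟨le_of_lt h, ht.2⟩).mono_of_mem_nhdsWithin hmem
    have hev : z =ᶠ[nhdsWithin t (Icc 0 T₂)] z₂ := by
      have hIoi : Ioi T ∈ nhdsWithin t (Icc 0 T₂) :=
        mem_nhdsWithin_of_mem_nhds (Ioi_mem_nhds h)
      filter_upwards [hIoi] with u hu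
      exact if_neg (not_le.mpr hu)
    have hzt : z t = z₂ t := if_neg (not_le.mpr h)
    have := hd.congr_of_eventuallyEq hev hzt
    rwa [← hzt] at this

theorem sol_unique (hM : 0 ≤ M) (hA : ∀ t ∈ Ici (0:ℝ), |A t| ≤ M)
    (hlam : 0 ≤ lam) (hp : 1 < p) {T₁ T₂ : ℝ} (h0₁ : 0 ≤ T₁) (h12 : T₁ ≤ T₂)
    {z₁ z₂ : ℝ → E × E}
    (h₁ : ∀ t ∈ Icc 0 T₁, HasDerivWithinAt z₁ (vfield A lam p t (z₁ t)) (Icc 0 T₁) t)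
    (h₂ : ∀ t ∈ Icc 0 T₂, HasDerivWithinAt z₂ (vfield A lam p t (z₂ t)) (Icc 0 T₂) t)
    (h0 : z₁ 0 = z₂ 0) : EqOn z₁ z₂ (Icc 0 T₁) := by
  have h0₂ : (0:ℝ) ≤ T₂ := le_trans h0₁ h12
  set B₁ : ℝ := Real.sqrt (en0 lam p (z₁ 0) * Real.exp ((1 + M) * T₁)) with hB₁
  set B₂ : ℝ := Real.sqrt (en0 lam p (z₂ 0) * Real.exp ((1 + M) * T₂)) with hB₂
  set ρ : ℝ := max B₁ B₂ with hρ
  have hρ0 : 0 ≤ ρ := le_trans (Real.sqrt_nonneg _) (le_max_left _ _)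
  have hbd₁ := apriori_bound hM hA hlam hp h0₁ h₁
  have hbd₂ := apriori_bound hM hA hlam hp h0₂ h₂
  apply ODE_solution_unique_of_mem_Icc_right
    (v := fun t => vfield A lam p (min (max t 0) T₁))
    (s := fun _ => Metric.closedBall (0 : E × E) ρ)
    (K := Real.toNNReal (1 + M + lam * p * ρ ^ (p - 1)))
  · intro t _
    have hmem : min (max t 0) T₁ ∈ Ici (0:ℝ) :=
      le_min (le_max_right _ _) h0₁
    exact vfield_lipschitzOnWith hM hlam hp (hA _ hmem) hρ0
  · exact fun t ht => (h₁ t ht).continuousWithinAt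
  · intro t ht
    have hcl : min (max t 0) T₁ = t := by
      rw [max_eq_left ht.1, min_eq_left (le_of_lt ht.2)]
    rw [hcl]
    exact (h₁ t (Ico_subset_Icc_self ht)).mono_of_mem_nhdsWithin (Icc_mem_nhdsGE_of_mem ht)
  · intro t ht
    rw [Metric.mem_closedBall, dist_zero_right]
    exact le_trans (hbd₁ t (Ico_subset_Icc_self ht)) (le_max_left _ _)
  · exact fun t ht => ((h₂ t ⟨ht.1, le_trans ht.2 h12⟩).continuousWithinAt).mono
      (Icc_subset_Icc_right h12)
  · intro t ht
    have hcl : min (max t 0) T₁ = t := by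
      rw [max_eq_left ht.1, min_eq_left (le_of_lt ht.2)]
    rw [hcl]
    have ht₂ : t ∈ Ico (0:ℝ) T₂ := ⟨ht.1, lt_of_lt_of_le ht.2 h12⟩
    exact (h₂ t (Ico_subset_Icc_self ht₂)).mono_of_mem_nhdsWithin (Icc_mem_nhdsGE_of_mem ht₂)
  · intro t ht
    rw [Metric.mem_closedBall, dist_zero_right]
    exact le_trans (hbd₂ t ⟨ht.1, le_trans (le_of_lt ht.2) h12⟩) (le_max_right _ _)
  · exact h0

theorem exist_on (hM : 0 ≤ M) (hA : ∀ t ∈ Ici (0:ℝ), |A t| ≤ M)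
    (hAc : ContinuousOn A (Ici 0)) (hlam : 0 ≤ lam) (hp : 1 < p) (z₀ : E × E)
    {T₀ : ℝ} (hT₀ : 0 ≤ T₀) :
    ∃ z : ℝ → E × E, z 0 = z₀ ∧
      ∀ t ∈ Icc 0 T₀, HasDerivWithinAt z (vfield A lam p t (z t)) (Icc 0 T₀) t := by
  set B : ℝ := Real.sqrt (en0 lam p z₀ * Real.exp ((1 + M) * T₀)) with hBdef
  have hB0 : 0 ≤ B := Real.sqrt_nonneg _
  set δ : ℝ := lstep M lam p B with hδdef
  have hδ0 : 0 < δ := lstep_pos hM hlam hB0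
  have key : ∀ k : ℕ, ∃ z : ℝ → E × E, z 0 = z₀ ∧
      ∀ t ∈ Icc 0 (min ((k : ℝ) * δ) T₀),
        HasDerivWithinAt z (vfield A lam p t (z t)) (Icc 0 (min ((k : ℝ) * δ) T₀)) t := by
    intro k
    induction k with
    | zero =>
      refine ⟨fun _ => z₀, rfl, ?_⟩
      intro t ht
      have h0 : min ((0 : ℕ) * δ : ℝ) T₀ = 0 := by
        push_cast; rw [zero_mul, min_eq_left hT₀]
      rw [h0] at ht ⊢
      rw [Icc_self] at ht ⊢
      have : t = 0 := ht
      subst this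
      exact hasDerivWithinAt_singleton _ _ _
    | succ k ih =>
      obtain ⟨z, hz0, hz⟩ := ih
      rcases le_or_gt T₀ ((k : ℝ) * δ) with hcase | hcase
      · have e1 : min ((k : ℝ) * δ) T₀ = T₀ := min_eq_right hcase
        have e2 : min (((k + 1 : ℕ) : ℝ) * δ) T₀ = T₀ := by
          apply min_eq_right
          push_cast
          nlinarith
        rw [e2, ← e1]
        exact ⟨z, hz0, hz⟩
      · have hkδ0 : (0:ℝ) ≤ (k : ℝ) * δ := by positivity
        have e1 : min ((k : ℝ) * δ) T₀ = (k : ℝ) * δ := min_eq_left (le_of_lt hcase)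
        rw [e1] at hz
        -- bound on z at time k*δ
        have hbd := apriori_bound hM hA hlam hp hkδ0 hz
        have hzB : ‖z ((k : ℝ) * δ)‖ ≤ B := by
          refine le_trans (hbd _ ⟨hkδ0, le_refl _⟩) ?_
          rw [hBdef, hz0]
          apply Real.sqrt_le_sqrt
          apply mul_le_mul_of_nonneg_left _ (en0_nonneg hlam hp _)
          apply Real.exp_le_exp.mpr
          have h1M : (0:ℝ) ≤ 1 + M := by linarith
          nlinarith
        obtain ⟨f, hfT, hf⟩ := local_exist hM hA hAc hlam hp hB0 hkδ0 hzB
        obtain ⟨zz, hzz0, hzz⟩ := glue_sol hkδ0 (by linarith : (k : ℝ) * δ ≤ (k : ℝ) * δ + δ)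
          hz hf hfT
        rw [hz0] at hzz0
        refine ⟨zz, hzz0, ?_⟩
        have hle : min (((k + 1 : ℕ) : ℝ) * δ) T₀ ≤ (k : ℝ) * δ + δ := by
          apply le_trans (min_le_left _ _)
          push_cast; linarith
        have h0le : (0:ℝ) ≤ min (((k + 1 : ℕ) : ℝ) * δ) T₀ := by
          apply le_min _ hT₀
          positivity
        intro t ht
        have ht' : t ∈ Icc 0 ((k : ℝ) * δ + δ) := ⟨ht.1, le_trans ht.2 hle⟩
        exact (hzz t ht').mono (Icc_subset_Icc_right hle)
  obtain ⟨k, hk⟩ := exists_nat_ge (T₀ / δ)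
  obtain ⟨z, hz0, hz⟩ := key k
  have hmin : min ((k : ℝ) * δ) T₀ = T₀ := by
    apply min_eq_right
    rw [div_le_iff₀ hδ0] at hk
    linarith
  rw [hmin] at hz
  exact ⟨z, hz0, hz⟩

theorem global_sol (hM : 0 ≤ M) (hA : ∀ t ∈ Ici (0:ℝ), |A t| ≤ M)
    (hAc : ContinuousOn A (Ici 0)) (hlam : 0 ≤ lam) (hp : 1 < p) (z₀ : E × E) :
    ∃ z : ℝ → E × E, z 0 = z₀ ∧
      ∀ t ∈ Ici (0:ℝ), HasDerivWithinAt z (vfield A lam p t (z t)) (Ici 0) t := by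
  have hex : ∀ k : ℕ, ∃ z : ℝ → E × E, z 0 = z₀ ∧
      ∀ t ∈ Icc 0 (k : ℝ), HasDerivWithinAt z (vfield A lam p t (z t)) (Icc 0 (k : ℝ)) t :=
    fun k => exist_on hM hA hAc hlam hp z₀ (Nat.cast_nonneg k)
  choose Z hZ0 hZ using hex
  have hagree : ∀ j k : ℕ, j ≤ k → EqOn (Z j) (Z k) (Icc 0 (j : ℝ)) := by
    intro j k hjk
    exact sol_unique hM hA hlam hp (Nat.cast_nonneg j) (by exact_mod_cast hjk)
      (hZ j) (hZ k) (by rw [hZ0 j, hZ0 k])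
  refine ⟨fun t => Z (⌊t⌋₊ + 1) t, by simpa using hZ0 1, ?_⟩
  intro t ht
  set k : ℕ := ⌊t⌋₊ + 1 with hkdef
  have htk : t < (k : ℝ) := by
    rw [hkdef]; push_cast; exact Nat.lt_floor_add_one t
  have hmem : Icc (0:ℝ) (k : ℝ) ∈ nhdsWithin t (Ici 0) := by
    apply mem_nhdsWithin.mpr
    exact ⟨Iio (k : ℝ), isOpen_Iio, htk, fun u hu => ⟨hu.2, le_of_lt hu.1⟩⟩
  have hder := (hZ k t ⟨ht, le_of_lt htk⟩).mono_of_mem_nhdsWithin hmem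
  have hev : (fun t => Z (⌊t⌋₊ + 1) t) =ᶠ[nhdsWithin t (Ici 0)] Z k := by
    have hm2 : (Iio (k:ℝ) ∩ Ici 0) ∈ nhdsWithin t (Ici 0) := by
      apply inter_mem (mem_nhdsWithin_of_mem_nhds (Iio_mem_nhds htk)) self_mem_nhdsWithin
    filter_upwards [hm2] with u hu
    have hu0 : (0:ℝ) ≤ u := hu.2
    have huj : u ≤ ((⌊u⌋₊ + 1 : ℕ) : ℝ) := by
      push_cast; exact le_of_lt (Nat.lt_floor_add_one u)
    rcases le_total (⌊u⌋₊ + 1) k with hc | hc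
    · exact hagree _ _ hc ⟨hu0, huj⟩
    · exact (hagree _ _ hc ⟨hu0, le_of_lt hu.1⟩).symm
  exact hder.congr_of_eventuallyEq hev rfl

end glue

theorem AFun_cont_bound (n : ℕ) (hn : 1 ≤ n) (σ a₀ a₁ : ℝ)
    (ha₀ : 0 < a₀) (ha₁ : 0 < a₁) (hσ : -1 + 2 / (n : ℝ) < σ) :
    ∃ M : ℝ, 0 ≤ M ∧ ContinuousOn (AFun n σ a₀ a₁) (Set.Ici 0) ∧
      ∀ t ∈ Set.Ici (0:ℝ), |AFun n σ a₀ a₁ t| ≤ M := by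
  have hn0 : (0 : ℝ) < n := by exact_mod_cast hn
  have h2n : (0:ℝ) < 2 / (n:ℝ) := by positivity
  have h1σ : (0:ℝ) < 1 + σ := by linarith
  set c : ℝ := (n : ℝ) * (1 + σ) * a₁ / (2 * a₀) with hcdef
  have hc0 : 0 < c := by positivity
  set coeff : ℝ := (2 / ((n : ℝ) * (1 + σ))) * (1 - 2 / ((n : ℝ) * (1 + σ))) * c ^ 2 with hcf
  have hform := AFun_formula n hn σ a₀ a₁ ha₀ ha₁ hσ
  have hpos : ∀ t ∈ Set.Ici (0:ℝ), 0 < 1 + c * t := by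
    intro t ht
    have : 0 ≤ c * t := mul_nonneg (le_of_lt hc0) ht
    linarith
  have heq : ∀ t ∈ Set.Ici (0:ℝ), AFun n σ a₀ a₁ t = coeff * ((1 + c * t)⁻¹) ^ 2 := by
    intro t ht
    rw [hform t (hpos t ht), hcf]
  refine ⟨|coeff|, abs_nonneg _, ?_, ?_⟩
  · have hcont : ContinuousOn (fun t => coeff * ((1 + c * t)⁻¹) ^ 2) (Set.Ici 0) := by
      apply ContinuousOn.mul continuousOn_const
      apply ContinuousOn.pow
      apply ContinuousOn.inv₀
      · exact (by continuity : Continuous fun t : ℝ => 1 + c * t).continuousOn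
      · exact fun t ht => ne_of_gt (hpos t ht)
    exact hcont.congr (fun t ht => heq t ht)
  · intro t ht
    rw [heq t ht, abs_mul]
    have h1 : (1 + c * t)⁻¹ ≤ 1 := by
      rw [inv_le_one_iff₀]
      right; linarith [hpos t ht, mul_nonneg (le_of_lt hc0) (Set.mem_Ici.mp ht)]
    have h2 : 0 ≤ (1 + c * t)⁻¹ := le_of_lt (inv_pos.mpr (hpos t ht))
    have h3 : |((1 + c * t)⁻¹) ^ 2| ≤ 1 := by
      rw [abs_of_nonneg (by positivity)]
      nlinarith
    calc |coeff| * |((1 + c * t)⁻¹) ^ 2| ≤ |coeff| * 1 :=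
          mul_le_mul_of_nonneg_left h3 (abs_nonneg _)
    _ = |coeff| := mul_one _


/-- Case (i): `a₁ > 0`, `σ > -1 + 2/n`, `λ ≥ 0`. Global existence of a `C¹` solution of
`D_t²Y + A(t)Y + λ|Y|^{p-1}Y = 0`, `Y(0) = Y₀`, `D_tY(0) = Y₁`, on `[0, ∞)`. -/
theorem stmt_2 (n : ℕ) (hn : 1 ≤ n) (σ a₀ a₁ lam p : ℝ)
    (ha₀ : 0 < a₀) (ha₁ : 0 < a₁) (hσ : -1 + 2 / (n : ℝ) < σ) (hp : 1 < p)
    (hlam : 0 ≤ lam)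
    (Y₀ Y₁ : EuclideanSpace ℝ (Fin n)) :
    ∃ Y Y' : ℝ → EuclideanSpace ℝ (Fin n),
      (∀ t ∈ Ici (0 : ℝ), HasDerivWithinAt Y (Y' t) (Ici (0 : ℝ)) t) ∧
      (∀ t ∈ Ici (0 : ℝ), HasDerivWithinAt Y'
        (-(AFun n σ a₀ a₁ t • Y t) - (lam * ‖Y t‖ ^ (p - 1)) • Y t) (Ici (0 : ℝ)) t) ∧
      ContinuousOn Y' (Ici (0 : ℝ)) ∧
      Y 0 = Y₀ ∧ Y' 0 = Y₁ := by
  obtain ⟨M, hM, hAc, hA⟩ := AFun_cont_bound n hn σ a₀ a₁ ha₀ ha₁ hσ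
  obtain ⟨z, hz0, hz⟩ := global_sol (E := EuclideanSpace ℝ (Fin n))
    hM hA hAc hlam hp (Y₀, Y₁)
  refine ⟨fun t => (z t).1, fun t => (z t).2,
    fun t ht => hasDerivWithinAt_fst (hz t ht),
    fun t ht => hasDerivWithinAt_snd (hz t ht),
    fun t ht => (hasDerivWithinAt_snd (hz t ht)).continuousWithinAt,
    by show (z 0).1 = Y₀; rw [hz0], by show (z 0).2 = Y₁; rw [hz0]⟩
end

section
/- Assume either a₁ = 0 and σ ∈ ℝ (case (ii)), or a₁ ≠ 0 and σ = −1 + 2/n (case (iii)); in both cases A ≡ 0 on [0,T₁). Then there exist constants C₀ > 0 and C > 0, independent of the data, such that for any Y₀, Y₁ ∈ ℝⁿ, any R₀ ≥ 2|Y₀|, any R₁ ≥ C₀|Y₁|, and any T with 0 < T ≤ min{ C/R₀^{p−1}, C/R₀^{(p−1)/2}, C·R₁/R₀^p, R₀/(2R₁) }, the Cauchy problem D_t²Y(t) + λ|Y(t)|^{p−1}Y(t) = 0 on [0,T), Y(0) = Y₀, D_tY(0) = Y₁, has a unique solution Y ∈ C¹([0,T)) with ‖Y‖_{L^∞((0,T))}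 ≤ R₀ and ‖D_tY‖_{L^∞((0,T))} ≤ R₁. -/
open Set Real

/-- MVT bound for rpow with exponent ≥ 1. -/
lemma aux_rpow_lip_ge_one {q R x y : ℝ} (hq : 1 ≤ q) (hy : 0 ≤ y) (hxy : y ≤ x) (hxR : x ≤ R) :
    x ^ q - y ^ q ≤ q * R ^ (q - 1) * (x - y) := by
  have hR : 0 ≤ R := le_trans (hy.trans hxy) hxR
  have key := Convex.norm_image_sub_le_of_norm_hasDerivWithin_le
    (f := fun t : ℝ => t ^ q) (f' := fun t : ℝ => q * t ^ (q - 1)) (s := Icc 0 R)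
    (C := q * R ^ (q - 1))
    (fun t ht => (Real.hasDerivAt_rpow_const (Or.inr hq)).hasDerivWithinAt)
    (fun t ht => by
      show ‖q * t ^ (q - 1)‖ ≤ q * R ^ (q - 1)
      have h0 : (0:ℝ) ≤ t ^ (q - 1) := Real.rpow_nonneg ht.1 _
      rw [Real.norm_eq_abs, abs_of_nonneg (by nlinarith)]
      have : t ^ (q - 1) ≤ R ^ (q - 1) :=
        Real.rpow_le_rpow ht.1 ht.2 (by linarith)
      nlinarith)
    (convex_Icc 0 R) ⟨hy, hxy.trans hxR⟩ ⟨hy.trans hxy, hxR⟩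
  have := (le_abs_self (x ^ q - y ^ q)).trans (by simpa [Real.norm_eq_abs] using key)
  calc x ^ q - y ^ q ≤ q * R ^ (q - 1) * |x - y| := this
    _ = q * R ^ (q - 1) * (x - y) := by rw [abs_of_nonneg (by linarith)]

/-- MVT bound for rpow with exponent ≤ 1, away from 0. -/
lemma aux_rpow_lip_le_one {q x y : ℝ} (hq : 0 < q) (hq1 : q ≤ 1) (hy : 0 < y) (hxy : y ≤ x) :
    x ^ q - y ^ q ≤ q * y ^ (q - 1) * (x - y) := by
  have key := Convex.norm_image_sub_le_of_norm_hasDerivWithin_le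
    (f := fun t : ℝ => t ^ q) (f' := fun t : ℝ => q * t ^ (q - 1)) (s := Icc y x)
    (C := q * y ^ (q - 1))
    (fun t ht => (Real.hasDerivAt_rpow_const (Or.inl (by linarith [ht.1] : t ≠ 0))).hasDerivWithinAt)
    (fun t ht => by
      show ‖q * t ^ (q - 1)‖ ≤ q * y ^ (q - 1)
      have h0 : (0:ℝ) ≤ t ^ (q - 1) := Real.rpow_nonneg (hy.le.trans ht.1) _
      rw [Real.norm_eq_abs, abs_of_nonneg (by nlinarith)]
      have : t ^ (q - 1) ≤ y ^ (q - 1) :=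
        Real.rpow_le_rpow_of_nonpos hy ht.1 (by linarith)
      nlinarith)
    (convex_Icc y x) ⟨le_refl y, hxy⟩ ⟨hxy, le_refl x⟩
  have := (le_abs_self (x ^ q - y ^ q)).trans (by simpa [Real.norm_eq_abs] using key)
  calc x ^ q - y ^ q ≤ q * y ^ (q - 1) * |x - y| := this
    _ = q * y ^ (q - 1) * (x - y) := by rw [abs_of_nonneg (by linarith)]

lemma aux_scalar {q R x y : ℝ} (hq : 0 < q) (hx0 : 0 ≤ x) (hxR : x ≤ R) (hy0 : 0 ≤ y)
    (hyR : y ≤ R) : |x ^ q - y ^ q| * y ≤ (2 * q + 2) * R ^ q * |x - y| := by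
  have hR : 0 ≤ R := hx0.trans hxR
  rcases eq_or_lt_of_le hy0 with rfl | hy
  · simp only [mul_zero]
    positivity
  have hRpos : 0 < R := lt_of_lt_of_le hy hyR
  have hRq : R ^ (q - 1) * R = R ^ q := by
    rw [← Real.rpow_add_one (ne_of_gt hRpos)]; ring_nf
  have hyq : y ^ (q - 1) * y = y ^ q := by
    rw [← Real.rpow_add_one (ne_of_gt hy)]; ring_nf
  have hyqR : y ^ q ≤ R ^ q := Real.rpow_le_rpow hy0 hyR hq.le
  rcases le_or_gt 1 q with h1 | h1
  · -- q ≥ 1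
    have habs : |x ^ q - y ^ q| ≤ q * R ^ (q - 1) * |x - y| := by
      rcases le_total y x with hxy | hxy
      · have := aux_rpow_lip_ge_one h1 hy0 hxy hxR
        have hmono : y ^ q ≤ x ^ q := Real.rpow_le_rpow hy0 hxy hq.le
        rw [abs_of_nonneg (by linarith), abs_of_nonneg (by linarith)]; linarith
      · have := aux_rpow_lip_ge_one h1 hx0 hxy hyR
        have hmono : x ^ q ≤ y ^ q := Real.rpow_le_rpow hx0 hxy hq.le
        rw [abs_of_nonpos (by linarith), abs_of_nonpos (by linarith)]; linarith
    have h2 : |x ^ q - y ^ q| * y ≤ q * R ^ (q - 1) * |x - y| * R := by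
      have h3 : (0:ℝ) ≤ q * R ^ (q - 1) * |x - y| :=
        mul_nonneg (mul_nonneg hq.le (Real.rpow_nonneg hR _)) (abs_nonneg _)
      have := mul_le_mul habs hyR hy0 h3
      nlinarith [abs_nonneg (x ^ q - y ^ q)]
    calc |x ^ q - y ^ q| * y ≤ q * R ^ (q - 1) * |x - y| * R := h2
      _ = q * (R ^ (q - 1) * R) * |x - y| := by ring
      _ = q * R ^ q * |x - y| := by rw [hRq]
      _ ≤ (2 * q + 2) * R ^ q * |x - y| := by
          nlinarith [mul_nonneg (Real.rpow_nonneg hR q) (abs_nonneg (x - y))]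
  · -- q < 1
    rcases le_total y x with hxy | hxy
    · have hmvt := aux_rpow_lip_le_one hq h1.le hy hxy
      have hmono : y ^ q ≤ x ^ q := Real.rpow_le_rpow hy0 hxy hq.le
      rw [abs_of_nonneg (by linarith), abs_of_nonneg (by linarith)]
      have : (x ^ q - y ^ q) * y ≤ q * y ^ (q - 1) * (x - y) * y := by
        nlinarith
      calc (x ^ q - y ^ q) * y ≤ q * (y ^ (q - 1) * y) * (x - y) := by nlinarith
        _ = q * y ^ q * (x - y) := by rw [hyq]
        _ ≤ (2 * q + 2) * R ^ q * (x - y) := by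
            nlinarith [mul_le_mul_of_nonneg_left
              (mul_le_mul_of_nonneg_right hyqR (sub_nonneg.2 hxy)) hq.le,
              mul_nonneg (Real.rpow_nonneg hR q) (sub_nonneg.2 hxy)]
    · -- x ≤ y
      have hmono : x ^ q ≤ y ^ q := Real.rpow_le_rpow hx0 hxy hq.le
      rw [abs_of_nonpos (by linarith), abs_of_nonpos (by linarith), neg_sub, neg_sub]
      rcases le_or_gt y (2 * x) with h2x | h2x
      · have hx : 0 < x := by linarith
        have hmvt := aux_rpow_lip_le_one hq h1.le hx hxy
        have hhalf : (0:ℝ) < y / 2 := by linarith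
        have hle : x ^ (q - 1) ≤ (y / 2) ^ (q - 1) :=
          Real.rpow_le_rpow_of_nonpos hhalf (by linarith) (by linarith)
        have hsplit : (y / 2 : ℝ) ^ (q - 1) = y ^ (q - 1) * (2⁻¹ : ℝ) ^ (q - 1) := by
          rw [div_eq_mul_inv, Real.mul_rpow hy0 (by norm_num)]
        have h2le : ((2:ℝ)⁻¹) ^ (q - 1) ≤ 2 := by
          rw [Real.inv_rpow (by norm_num), ← Real.rpow_neg (by norm_num)]
          calc (2:ℝ) ^ (-(q - 1)) ≤ (2:ℝ) ^ (1:ℝ) :=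
                Real.rpow_le_rpow_of_exponent_le one_le_two (by linarith)
            _ = 2 := Real.rpow_one 2
        have hx2y : x ^ (q - 1) ≤ 2 * y ^ (q - 1) := by
          have hyq1 : (0:ℝ) ≤ y ^ (q - 1) := Real.rpow_nonneg hy0 _
          calc x ^ (q - 1) ≤ y ^ (q - 1) * (2⁻¹:ℝ) ^ (q - 1) := by rw [← hsplit]; exact hle
            _ ≤ y ^ (q - 1) * 2 := by nlinarith
            _ = 2 * y ^ (q - 1) := by ring
        have hyq1 : (0:ℝ) ≤ y ^ (q - 1) := Real.rpow_nonneg hy0 _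
        calc (y ^ q - x ^ q) * y ≤ q * x ^ (q - 1) * (y - x) * y := by nlinarith
          _ ≤ q * (2 * y ^ (q - 1)) * (y - x) * y := by
              nlinarith [mul_le_mul_of_nonneg_left
                (mul_le_mul_of_nonneg_right hx2y (mul_nonneg (sub_nonneg.2 hxy) hy0)) hq.le]
          _ = 2 * q * (y ^ (q - 1) * y) * (y - x) := by ring
          _ = 2 * q * y ^ q * (y - x) := by rw [hyq]
          _ ≤ (2 * q + 2) * R ^ q * (y - x) := by
              nlinarith [mul_le_mul_of_nonneg_left
                (mul_le_mul_of_nonneg_right hyqR (sub_nonneg.2 hxy)) hq.le,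
                mul_nonneg (Real.rpow_nonneg hR q) (sub_nonneg.2 hxy)]
      · -- y > 2x
        have hxq : (0:ℝ) ≤ x ^ q := Real.rpow_nonneg hx0 _
        have hyqpos : (0:ℝ) ≤ y ^ q := Real.rpow_nonneg hy0 _
        calc (y ^ q - x ^ q) * y ≤ y ^ q * y := by nlinarith
          _ ≤ R ^ q * (2 * (y - x)) := by nlinarith
          _ ≤ (2 * q + 2) * R ^ q * (y - x) := by
              nlinarith [mul_nonneg (Real.rpow_nonneg hR q) (sub_nonneg.2 hxy), hq.le]

lemma aux_vec {F : Type*} [NormedAddCommGroup F] [NormedSpace ℝ F] {q R : ℝ} (hq : 0 < q)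
    {a b : F} (ha : ‖a‖ ≤ R) (hb : ‖b‖ ≤ R) :
    ‖(‖a‖ ^ q) • a - (‖b‖ ^ q) • b‖ ≤ (2 * q + 3) * R ^ q * ‖a - b‖ := by
  have hR : 0 ≤ R := (norm_nonneg a).trans ha
  have key : (‖a‖ ^ q) • a - (‖b‖ ^ q) • b
      = (‖a‖ ^ q) • (a - b) + (‖a‖ ^ q - ‖b‖ ^ q) • b := by
    rw [smul_sub, sub_smul]; abel
  have h1 : ‖a‖ ^ q ≤ R ^ q := Real.rpow_le_rpow (norm_nonneg a) ha hq.le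
  have h2 := aux_scalar hq (norm_nonneg a) ha (norm_nonneg b) hb
  have h3 : |‖a‖ - ‖b‖| ≤ ‖a - b‖ := abs_norm_sub_norm_le a b
  calc ‖(‖a‖ ^ q) • a - (‖b‖ ^ q) • b‖
      ≤ ‖(‖a‖ ^ q) • (a - b)‖ + ‖(‖a‖ ^ q - ‖b‖ ^ q) • b‖ := by
        rw [key]; exact norm_add_le _ _
    _ = ‖a‖ ^ q * ‖a - b‖ + |‖a‖ ^ q - ‖b‖ ^ q| * ‖b‖ := by
        rw [norm_smul, norm_smul, Real.norm_eq_abs, Real.norm_eq_abs,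
          abs_of_nonneg (Real.rpow_nonneg (norm_nonneg a) q)]
    _ ≤ R ^ q * ‖a - b‖ + (2 * q + 2) * R ^ q * |‖a‖ - ‖b‖| := by
        have := Real.rpow_nonneg hR q
        nlinarith [norm_nonneg (a - b), abs_nonneg (‖a‖ ^ q - ‖b‖ ^ q), norm_nonneg b]
    _ ≤ R ^ q * ‖a - b‖ + (2 * q + 2) * R ^ q * ‖a - b‖ := by
        have h4 := mul_le_mul_of_nonneg_left h3
          (by positivity : (0:ℝ) ≤ 2 * q + 2)
        nlinarith [mul_le_mul_of_nonneg_left h3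
          (mul_nonneg (by positivity : (0:ℝ) ≤ 2 * q + 2) (Real.rpow_nonneg hR q))]
    _ = (2 * q + 3) * R ^ q * ‖a - b‖ := by ring

open scoped NNReal in
/-- Picard–Lindelöf with the extra conclusion that the solution stays in the closed ball. -/
theorem aux_pl_exists_mem {E : Type*} [NormedAddCommGroup E] [NormedSpace ℝ E] [CompleteSpace E]
    {v : ℝ → E → E} {tMin t₀ tMax : ℝ} (ht₀ : t₀ ∈ Icc tMin tMax) (x₀ : E) {a L K : ℝ≥0}
    (hpl : IsPicardLindelof v ⟨t₀, ht₀⟩ x₀ a 0 L K) :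
    ∃ f : ℝ → E, f t₀ = x₀ ∧ (∀ t ∈ Icc tMin tMax, f t ∈ Metric.closedBall x₀ a) ∧
      ∀ t ∈ Icc tMin tMax, HasDerivWithinAt f (v t (f t)) (Icc tMin tMax) t := by
  obtain ⟨α, hα⟩ := ODE.FunSpace.exists_isFixedPt_next hpl
    (Metric.mem_closedBall_self le_rfl)
  refine ⟨α.compProj, ?_, fun t _ => α.compProj_mem_closedBall hpl.mul_max_le, fun t ht ↦ ?_⟩
  · have := ODE.FunSpace.compProj_val (α := α) (t := ⟨t₀, ht₀⟩)
    rw [this, ← hα, ODE.FunSpace.next_apply₀]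
  apply ODE.hasDerivWithinAt_picard_Icc ht₀ hpl.continuousOn_uncurry
    α.continuous_compProj.continuousOn (fun _ ht' ↦ α.compProj_mem_closedBall hpl.mul_max_le)
    x₀ ht |>.congr_of_mem _ ht
  intro t' ht'
  nth_rw 1 [← hα]
  rw [ODE.FunSpace.compProj_of_mem ht', ODE.FunSpace.next_apply]
set_option maxHeartbeats 2000000 in
/-- Cases (ii) and (iii): `a₁ = 0`, or `a₁ ≠ 0` and `σ = -1 + 2/n` (so that `A ≡ 0`).
Local existence and uniqueness of a `C¹` solution of `D_t²Y + λ|Y|^{p-1}Y = 0`,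
`Y(0) = Y₀`, `D_tY(0) = Y₁`, with `‖Y‖_{L^∞((0,T))} ≤ R₀` and `‖D_tY‖_{L^∞((0,T))} ≤ R₁`,
for any `T ≤ min{C/R₀^{p-1}, C/R₀^{(p-1)/2}, C·R₁/R₀^p, R₀/(2R₁)}`. -/
theorem stmt_3 (n : ℕ) (hn : 1 ≤ n) (σ a₀ a₁ lam p : ℝ)
    (ha₀ : 0 < a₀) (hp : 1 < p)
    (hcase : a₁ = 0 ∨ (a₁ ≠ 0 ∧ σ = -1 + 2 / (n : ℝ))) :
    ∃ C₀ C : ℝ, 0 < C₀ ∧ 0 < C ∧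
      ∀ (Y₀ Y₁ : EuclideanSpace ℝ (Fin n)) (R₀ R₁ T : ℝ),
        2 * ‖Y₀‖ ≤ R₀ → C₀ * ‖Y₁‖ ≤ R₁ → 0 < T →
        T ≤ min (min (C / R₀ ^ (p - 1)) (C / R₀ ^ ((p - 1) / 2)))
              (min (C * R₁ / R₀ ^ p) (R₀ / (2 * R₁))) →
        ∃ Y Y' : ℝ → EuclideanSpace ℝ (Fin n),
          ((∀ t ∈ Ico (0 : ℝ) T, HasDerivWithinAt Y (Y' t) (Ico (0 : ℝ) T) t) ∧
           (∀ t ∈ Ico (0 : ℝ) T, HasDerivWithinAt Y'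
             (-((lam * ‖Y t‖ ^ (p - 1)) • Y t)) (Ico (0 : ℝ) T) t) ∧
           ContinuousOn Y' (Ico (0 : ℝ) T) ∧
           Y 0 = Y₀ ∧ Y' 0 = Y₁ ∧
           (∀ t ∈ Ico (0 : ℝ) T, ‖Y t‖ ≤ R₀) ∧
           (∀ t ∈ Ico (0 : ℝ) T, ‖Y' t‖ ≤ R₁)) ∧
          (∀ Z Z' : ℝ → EuclideanSpace ℝ (Fin n),
            (∀ t ∈ Ico (0 : ℝ) T, HasDerivWithinAt Z (Z' t) (Ico (0 : ℝ) T) t) →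
            (∀ t ∈ Ico (0 : ℝ) T, HasDerivWithinAt Z'
              (-((lam * ‖Z t‖ ^ (p - 1)) • Z t)) (Ico (0 : ℝ) T) t) →
            ContinuousOn Z' (Ico (0 : ℝ) T) →
            Z 0 = Y₀ → Z' 0 = Y₁ →
            (∀ t ∈ Ico (0 : ℝ) T, ‖Z t‖ ≤ R₀) →
            (∀ t ∈ Ico (0 : ℝ) T, ‖Z' t‖ ≤ R₁) →
            ∀ t ∈ Ico (0 : ℝ) T, Z t = Y t) := by
  classical
  have hq : 0 < p - 1 := by linarith
  set Cc : ℝ := 1 / (2 * (1 + |lam|)) with hCc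
  have hCcpos : 0 < Cc := by positivity
  clear_value Cc
  refine ⟨2, Cc, two_pos, hCcpos, ?_⟩
  intro Y₀ Y₁ R₀ R₁ T hY₀ hY₁ hT0 hT
  have hTlast : T ≤ R₀ / (2 * R₁) := hT.trans ((min_le_right _ _).trans (min_le_right _ _))
  have hTcr : T ≤ Cc * R₁ / R₀ ^ p := hT.trans ((min_le_right _ _).trans (min_le_left _ _))
  have hR₁0 : 0 ≤ R₁ := le_trans (by positivity) hY₁
  have hR₁ : 0 < R₁ := by
    rcases eq_or_lt_of_le hR₁0 with h | h
    · rw [← h, mul_zero, div_zero] at hTlast; linarith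
    · exact h
  have hR₀0 : 0 ≤ R₀ := le_trans (by positivity) hY₀
  have hR₀ : 0 < R₀ := by
    rcases eq_or_lt_of_le hR₀0 with h | h
    · rw [← h, zero_div] at hTlast; linarith
    · exact h
  set α : ℝ := R₀ / R₁ with hαdef
  have hα : 0 < α := div_pos hR₀ hR₁
  have hαR₁ : α * R₁ = R₀ := div_mul_cancel₀ _ hR₁.ne'
  clear_value α
  have hR₀p : R₀ ^ (p - 1) * R₀ = R₀ ^ p := by
    have h : p - 1 + 1 = p := by ring
    rw [← Real.rpow_add_one hR₀.ne', h]
  set Mg : ℝ := |lam| * ((2 * (p - 1) + 3) * R₀ ^ (p - 1)) with hMg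
  have hMg0 : 0 ≤ Mg := by
    rw [hMg]; positivity
  clear_value Mg
  have hgLip : ∀ a b : EuclideanSpace ℝ (Fin n), ‖a‖ ≤ R₀ → ‖b‖ ≤ R₀ →
      ‖(lam * ‖a‖ ^ (p - 1)) • a - (lam * ‖b‖ ^ (p - 1)) • b‖ ≤ Mg * ‖a - b‖ := by
    intro a b ha hb
    have h := aux_vec hq ha hb
    calc ‖(lam * ‖a‖ ^ (p - 1)) • a - (lam * ‖b‖ ^ (p - 1)) • b‖
        = ‖lam • ((‖a‖ ^ (p - 1)) • a) - lam • ((‖b‖ ^ (p - 1)) • b)‖ := by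
          rw [smul_smul, smul_smul]
      _ = |lam| * ‖(‖a‖ ^ (p - 1)) • a - (‖b‖ ^ (p - 1)) • b‖ := by
          rw [← smul_sub, norm_smul, Real.norm_eq_abs]
      _ ≤ |lam| * (2 * (p - 1) + 3) * R₀ ^ (p - 1) * ‖a - b‖ := by
          nlinarith [abs_nonneg lam, norm_nonneg
            ((‖a‖ ^ (p - 1)) • a - (‖b‖ ^ (p - 1)) • b),
            mul_le_mul_of_nonneg_left h (abs_nonneg lam)]
      _ = Mg * ‖a - b‖ := by rw [hMg]; ring
  set V : ℝ → (EuclideanSpace ℝ (Fin n) × EuclideanSpace ℝ (Fin n)) →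
      (EuclideanSpace ℝ (Fin n) × EuclideanSpace ℝ (Fin n)) :=
    fun _ u => (α⁻¹ • u.2, -(α • ((lam * ‖u.1‖ ^ (p - 1)) • u.1))) with hV
  set S : Set (EuclideanSpace ℝ (Fin n) × EuclideanSpace ℝ (Fin n)) :=
    {u | ‖u.1‖ ≤ R₀ ∧ ‖u.2‖ ≤ R₀} with hS
  set Lr : ℝ := max α⁻¹ (α * Mg) with hLrdef
  have hLr0 : 0 ≤ Lr := le_trans (inv_pos.2 hα).le (le_max_left _ _)
  have hLr1 : α⁻¹ ≤ Lr := le_max_left _ _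
  have hLr2 : α * Mg ≤ Lr := le_max_right _ _
  clear_value Lr
  have hVLip : ∀ τ : ℝ, LipschitzOnWith (Real.toNNReal Lr) (V τ) S := by
    intro τ
    apply LipschitzOnWith.of_dist_le_mul
    intro u hu u' hu'
    have hu1 : ‖u.1‖ ≤ R₀ := hu.1
    have hu1' : ‖u'.1‖ ≤ R₀ := hu'.1
    have hd : dist (V τ u) (V τ u')
        = max ‖(V τ u).1 - (V τ u').1‖ ‖(V τ u).2 - (V τ u').2‖ := by
      rw [Prod.dist_eq, dist_eq_norm, dist_eq_norm]
    have hd' : dist u u' = max ‖u.1 - u'.1‖ ‖u.2 - u'.2‖ := by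
      rw [Prod.dist_eq, dist_eq_norm, dist_eq_norm]
    rw [Real.coe_toNNReal _ hLr0, hd, hd']
    apply max_le
    · show ‖α⁻¹ • u.2 - α⁻¹ • u'.2‖ ≤ _
      rw [← smul_sub, norm_smul, Real.norm_eq_abs, abs_of_pos (inv_pos.2 hα)]
      exact mul_le_mul hLr1 (le_max_right _ _) (norm_nonneg _) hLr0
    · show ‖-(α • ((lam * ‖u.1‖ ^ (p - 1)) • u.1)) -
        -(α • ((lam * ‖u'.1‖ ^ (p - 1)) • u'.1))‖ ≤ _
      rw [neg_sub_neg, ← smul_sub, norm_smul, Real.norm_eq_abs, abs_of_pos hα]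
      have hg := hgLip u'.1 u.1 hu1' hu1
      calc α * ‖(lam * ‖u'.1‖ ^ (p - 1)) • u'.1 - (lam * ‖u.1‖ ^ (p - 1)) • u.1‖
          ≤ α * (Mg * ‖u'.1 - u.1‖) := mul_le_mul_of_nonneg_left hg hα.le
        _ = (α * Mg) * ‖u.1 - u'.1‖ := by rw [norm_sub_rev]; ring
        _ ≤ Lr * max ‖u.1 - u'.1‖ ‖u.2 - u'.2‖ :=
            mul_le_mul hLr2 (le_max_left _ _) (norm_nonneg _) hLr0
  have hball : Metric.closedBall ((Y₀, α • Y₁) :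
      EuclideanSpace ℝ (Fin n) × EuclideanSpace ℝ (Fin n)) (R₀ / 2) ⊆ S := by
    intro u hu
    rw [Metric.mem_closedBall, Prod.dist_eq, max_le_iff, dist_eq_norm, dist_eq_norm] at hu
    have h1 : ‖u.1‖ ≤ R₀ := by
      have := norm_sub_norm_le u.1 Y₀
      linarith [hu.1]
    have h2 : ‖u.2‖ ≤ R₀ := by
      have hs := norm_sub_norm_le u.2 (α • Y₁)
      have hn : ‖α • Y₁‖ = α * ‖Y₁‖ := by
        rw [norm_smul, Real.norm_eq_abs, abs_of_pos hα]
      have hY1 : α * ‖Y₁‖ ≤ R₀ / 2 := by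
        have := mul_le_mul_of_nonneg_left (by linarith : ‖Y₁‖ ≤ R₁ / 2) hα.le
        rw [show α * (R₁ / 2) = α * R₁ / 2 by ring, hαR₁] at this
        exact this
      rw [hn] at hs
      linarith [hu.2]
    exact ⟨h1, h2⟩
  set Cs : ℝ := max R₁ (α * (|lam| * R₀ ^ p)) with hCsdef
  have hCs1 : R₁ ≤ Cs := le_max_left _ _
  have hCs2 : α * (|lam| * R₀ ^ p) ≤ Cs := le_max_right _ _
  clear_value Cs
  have hRh : ((Real.toNNReal (R₀ / 2) : ℝ)) = R₀ / 2 := Real.coe_toNNReal _ (by positivity)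
  have hCs0 : 0 ≤ Cs := hR₁0.trans hCs1
  have hplf : IsPicardLindelof V (⟨0, le_refl 0, hT0.le⟩ : Icc (0:ℝ) T) ((Y₀, α • Y₁))
      (Real.toNNReal (R₀ / 2)) 0 (Real.toNNReal Cs) (Real.toNNReal Lr) := by
    refine ⟨fun t _ => (hVLip t).mono (by rw [hRh]; exact hball),
      fun x _ => continuousOn_const, ?_, ?_⟩
    · intro t _ u hu
      rw [hRh] at hu
      rw [Real.coe_toNNReal _ hCs0]
      obtain ⟨h1, h2⟩ := hball hu
      rw [Prod.norm_def]
      apply max_le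
      · show ‖α⁻¹ • u.2‖ ≤ Cs
        rw [norm_smul, Real.norm_eq_abs, abs_of_pos (inv_pos.2 hα)]
        have : α⁻¹ * ‖u.2‖ ≤ α⁻¹ * R₀ := mul_le_mul_of_nonneg_left h2 (inv_pos.2 hα).le
        have e : α⁻¹ * R₀ = R₁ := by rw [← hαR₁, inv_mul_cancel_left₀ hα.ne']
        exact le_trans (e ▸ this) hCs1
      · show ‖-(α • ((lam * ‖u.1‖ ^ (p - 1)) • u.1))‖ ≤ Cs
        rw [norm_neg, norm_smul, norm_smul, Real.norm_eq_abs, Real.norm_eq_abs,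
          abs_of_pos hα, abs_mul, abs_of_nonneg (Real.rpow_nonneg (norm_nonneg _) _)]
        have hb : ‖u.1‖ ^ (p - 1) * ‖u.1‖ ≤ R₀ ^ p := by
          rw [← hR₀p]
          exact mul_le_mul (Real.rpow_le_rpow (norm_nonneg _) h1 hq.le) h1 (norm_nonneg _)
            (Real.rpow_nonneg hR₀0 _)
        calc α * (|lam| * ‖u.1‖ ^ (p - 1) * ‖u.1‖)
            ≤ α * (|lam| * R₀ ^ p) := by
              nlinarith [abs_nonneg lam, mul_le_mul_of_nonneg_left hb (abs_nonneg lam),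
                Real.rpow_nonneg (norm_nonneg u.1) (p - 1), norm_nonneg u.1]
          _ ≤ Cs := hCs2
    · simp only [NNReal.coe_zero, tsub_zero, Real.coe_toNNReal _ hCs0, hRh]
      have hmax : max (T - 0) (0 - 0) = T := by
        rw [sub_zero, sub_zero, max_eq_left hT0.le]
      rw [max_eq_left hT0.le]
      have hTR₁ : T * (2 * R₁) ≤ R₀ := (le_div_iff₀ (by positivity)).1 hTlast
      have hTp : T * R₀ ^ p ≤ Cc * R₁ := (le_div_iff₀ (Real.rpow_pos_of_pos hR₀ p)).1 hTcr
      have hlamC : |lam| * Cc ≤ 1 / 2 := by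
        rw [hCc, mul_one_div, div_le_div_iff₀ (by positivity) two_pos]
        linarith [abs_nonneg lam]
      have key2 : α * (|lam| * R₀ ^ p) * T ≤ R₀ / 2 := by
        have h1 : α * |lam| * (T * R₀ ^ p) ≤ α * |lam| * (Cc * R₁) :=
          mul_le_mul_of_nonneg_left hTp (by positivity)
        have h2 : α * |lam| * (Cc * R₁) = |lam| * Cc * R₀ := by rw [← hαR₁]; ring
        have h3 : |lam| * Cc * R₀ ≤ 1 / 2 * R₀ := mul_le_mul_of_nonneg_right hlamC hR₀0
        calc α * (|lam| * R₀ ^ p) * T = α * |lam| * (T * R₀ ^ p) := by ring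
          _ ≤ α * |lam| * (Cc * R₁) := h1
          _ = |lam| * Cc * R₀ := h2
          _ ≤ 1 / 2 * R₀ := h3
          _ = R₀ / 2 := by ring
      calc Cs * T = max (R₁ * T) (α * (|lam| * R₀ ^ p) * T) := by
            rw [hCsdef]; exact max_mul_of_nonneg _ _ hT0.le
        _ ≤ R₀ / 2 := max_le (by linarith) key2
  obtain ⟨f, hf0, hfmem, hfd⟩ := aux_pl_exists_mem _ _ hplf
  have hIcoIcc : Ico (0 : ℝ) T ⊆ Icc 0 T := Ico_subset_Icc_self
  have hfS : ∀ t ∈ Icc (0 : ℝ) T, ‖(f t).1‖ ≤ R₀ ∧ ‖(f t).2‖ ≤ R₀ :=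
    fun t ht => hball (by have := hfmem t ht; rwa [hRh] at this)
  have hfd1 : ∀ t ∈ Icc (0 : ℝ) T,
      HasDerivWithinAt (fun τ => (f τ).1) (α⁻¹ • (f t).2) (Icc 0 T) t := by
    intro t ht
    have h := (ContinuousLinearMap.fst ℝ (EuclideanSpace ℝ (Fin n))
      (EuclideanSpace ℝ (Fin n))).hasFDerivAt.comp_hasDerivWithinAt t (hfd t ht)
    simpa [Function.comp_def] using h
  have hfd2 : ∀ t ∈ Icc (0 : ℝ) T,
      HasDerivWithinAt (fun τ => α⁻¹ • (f τ).2)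
        (-((lam * ‖(f t).1‖ ^ (p - 1)) • (f t).1)) (Icc 0 T) t := by
    intro t ht
    have h := ((ContinuousLinearMap.snd ℝ (EuclideanSpace ℝ (Fin n))
      (EuclideanSpace ℝ (Fin n))).hasFDerivAt.comp_hasDerivWithinAt t
        (hfd t ht)).const_smul α⁻¹
    have e : α⁻¹ • (V t (f t)).2 = -((lam * ‖(f t).1‖ ^ (p - 1)) • (f t).1) := by
      show α⁻¹ • -(α • ((lam * ‖(f t).1‖ ^ (p - 1)) • (f t).1)) = _
      rw [smul_neg, smul_smul, inv_mul_cancel₀ hα.ne', one_smul]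
    have h' : HasDerivWithinAt (fun τ => α⁻¹ • (f τ).2) (α⁻¹ • (V t (f t)).2) (Icc 0 T) t := by
      exact h
    rwa [e] at h'
  refine ⟨fun τ => (f τ).1, fun τ => α⁻¹ • (f τ).2,
    ⟨fun t ht => (hfd1 t (hIcoIcc ht)).mono hIcoIcc,
     fun t ht => (hfd2 t (hIcoIcc ht)).mono hIcoIcc,
     fun t ht => ((hfd2 t (hIcoIcc ht)).mono hIcoIcc).continuousWithinAt,
     by show (f 0).1 = Y₀; rw [hf0],
     by show α⁻¹ • (f 0).2 = Y₁
        rw [hf0]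
        show α⁻¹ • (α • Y₁) = Y₁
        rw [smul_smul, inv_mul_cancel₀ hα.ne', one_smul],
     fun t ht => (hfS t (hIcoIcc ht)).1,
     fun t ht => ?_⟩, ?_⟩
  · rw [norm_smul, Real.norm_eq_abs, abs_of_pos (inv_pos.2 hα)]
    calc α⁻¹ * ‖(f t).2‖ ≤ α⁻¹ * R₀ :=
          mul_le_mul_of_nonneg_left (hfS t (hIcoIcc ht)).2 (inv_pos.2 hα).le
      _ = R₁ := by rw [← hαR₁, inv_mul_cancel_left₀ hα.ne']
  · -- uniqueness
    intro Z Z' hZd hZ'd hZ'c hZ0 hZ'0 hZb hZ'b t ht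
    have hsub : Icc (0 : ℝ) t ⊆ Ico 0 T := fun x hx => ⟨hx.1, lt_of_le_of_lt hx.2 ht.2⟩
    have hsub' : Ico (0 : ℝ) t ⊆ Ico 0 T := fun x hx => ⟨hx.1, hx.2.trans ht.2⟩
    have hsub2 : Icc (0 : ℝ) t ⊆ Icc 0 T := hsub.trans hIcoIcc
    have hZc : ContinuousOn Z (Ico 0 T) := fun τ hτ => (hZd τ hτ).continuousWithinAt
    have hFc : ContinuousOn (fun τ => ((Z τ, α • Z' τ) :
        EuclideanSpace ℝ (Fin n) × EuclideanSpace ℝ (Fin n))) (Icc 0 t) :=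
      (hZc.mono hsub).prodMk ((hZ'c.mono hsub).const_smul α)
    have hF' : ∀ τ ∈ Ico (0 : ℝ) t,
        HasDerivWithinAt (fun τ => ((Z τ, α • Z' τ) :
          EuclideanSpace ℝ (Fin n) × EuclideanSpace ℝ (Fin n)))
          (V τ ((Z τ, α • Z' τ))) (Ici τ) τ := by
      intro τ hτ
      have hτ' : τ ∈ Ico (0 : ℝ) T := hsub' hτ
      have hmem : Ico (0 : ℝ) T ∈ nhdsWithin τ (Ici τ) := Ico_mem_nhdsGE_of_mem hτ'
      have h1 := (hZd τ hτ').mono_of_mem_nhdsWithin hmem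
      have h2 := ((hZ'd τ hτ').mono_of_mem_nhdsWithin hmem).const_smul α
      have h := h1.prodMk h2
      have e : V τ ((Z τ, α • Z' τ)) =
          (Z' τ, α • -((lam * ‖Z τ‖ ^ (p - 1)) • Z τ)) := by
        show (α⁻¹ • (α • Z' τ), -(α • ((lam * ‖Z τ‖ ^ (p - 1)) • Z τ))) = _
        rw [smul_smul, inv_mul_cancel₀ hα.ne', one_smul, smul_neg]
      rw [e]
      exact h
    have hFs : ∀ τ ∈ Ico (0 : ℝ) t, ((Z τ, α • Z' τ) :
        EuclideanSpace ℝ (Fin n) × EuclideanSpace ℝ (Fin n)) ∈ S := by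
      intro τ hτ
      refine ⟨hZb τ (hsub' hτ), ?_⟩
      show ‖α • Z' τ‖ ≤ R₀
      rw [norm_smul, Real.norm_eq_abs, abs_of_pos hα]
      calc α * ‖Z' τ‖ ≤ α * R₁ := mul_le_mul_of_nonneg_left (hZ'b τ (hsub' hτ)) hα.le
        _ = R₀ := hαR₁
    have hGc : ContinuousOn f (Icc 0 t) :=
      fun τ hτ => ((hfd τ (hsub2 hτ)).continuousWithinAt).mono hsub2
    have hG' : ∀ τ ∈ Ico (0 : ℝ) t, HasDerivWithinAt f (V τ (f τ)) (Ici τ) τ := by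
      intro τ hτ
      exact (hfd τ (hsub2 (Ico_subset_Icc_self hτ))).mono_of_mem_nhdsWithin
        (Filter.mem_of_superset (Ico_mem_nhdsGE_of_mem (hsub' hτ)) hIcoIcc)
    have hGs : ∀ τ ∈ Ico (0 : ℝ) t, f τ ∈ S :=
      fun τ hτ => hfS τ (hsub2 (Ico_subset_Icc_self hτ))
    have ha : ((Z 0, α • Z' 0) :
        EuclideanSpace ℝ (Fin n) × EuclideanSpace ℝ (Fin n)) = f 0 := by
      rw [hZ0, hZ'0, hf0]
    have huniq := ODE_solution_unique_of_mem_Icc_right (v := V) (s := fun _ => S)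
      (K := Real.toNNReal Lr) (fun τ _ => hVLip τ) hFc hF' hFs hGc hG' hGs ha
    have := huniq ⟨ht.1, le_refl t⟩
    exact congrArg Prod.fst this
end

section
/- Assume σ = −1 + 2/n and a₁ < 0 (so that T₁ = T₀ > 0 and A ≡ 0). Then there exists ε > 0 such that whenever Y₀, Y₁ ∈ ℝⁿ satisfy |Y₀| ≤ ε and |Y₁| ≤ ε, the Cauchy problem D_t²Y(t) + λ|Y(t)|^{p−1}Y(t) = 0, Y(0) = Y₀, D_tY(0) = Y₁, has a global solution, i.e., a C¹ solution with bounded value and bounded derivative defined on the whole interval [0,T₀). -/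
open Set


open Metric

/-- Key scalar inequality: for `0 ≤ a ≤ b ≤ 1` and `q > 0`, `(b^q - a^q) * b ≤ (q+1) * (b-a)`. -/
lemma key_rpow {a b q : ℝ} (ha : 0 ≤ a) (hab : a ≤ b) (hb : b ≤ 1) (hq : 0 < q) :
    (b ^ q - a ^ q) * b ≤ (q + 1) * (b - a) := by
  rcases le_or_gt b 0 with hb0 | hb0
  · have hb' : b = 0 := le_antisymm hb0 (ha.trans hab)
    have ha' : a = 0 := le_antisymm (hb' ▸ hab) ha
    simp [hb', ha']
  · have hq1 : (0:ℝ) < q + 1 := by linarith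
    have hbq : (0:ℝ) < b ^ (q + 1) := Real.rpow_pos_of_pos hb0 _
    have hbp : b ^ (q + 1) = b ^ q * b := by
      rw [Real.rpow_add hb0, Real.rpow_one]
    have hap : a ^ (q + 1) = a ^ q * a := by
      rw [Real.rpow_add' ha hq1.ne', Real.rpow_one]
    have hs : (-1:ℝ) ≤ a / b - 1 := by
      have : 0 ≤ a / b := div_nonneg ha hb0.le
      linarith
    have hber := one_add_mul_self_le_rpow_one_add hs (by linarith : (1:ℝ) ≤ q + 1)
    rw [add_sub_cancel] at hber
    have hmul := mul_le_mul_of_nonneg_right hber hbq.le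
    have hdiv : (a / b) ^ (q + 1) * b ^ (q + 1) = a ^ (q + 1) := by
      rw [Real.div_rpow ha hb0.le, div_mul_cancel₀ _ hbq.ne']
    rw [hdiv] at hmul
    have hab' : a / b * b = a := div_mul_cancel₀ a hb0.ne'
    have key2 : b ^ q * b - a ^ q * a ≤ (q + 1) * (b ^ q * (b - a)) := by
      rw [hbp, hap] at hmul
      have e1 : (q + 1) * b ^ q * (a / b * b) = (q + 1) * b ^ q * a := by rw [hab']
      nlinarith [hmul, e1]
    have hbq1 : b ^ q ≤ 1 := Real.rpow_le_one (ha.trans hab) hb hq.le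
    have haq0 : 0 ≤ a ^ q := Real.rpow_nonneg ha _
    have hbq0 : 0 ≤ b ^ q := Real.rpow_nonneg (ha.trans hab) _
    nlinarith [key2, mul_le_mul_of_nonneg_left hab haq0,
      mul_nonneg (mul_nonneg hq1.le (sub_nonneg.mpr hab)) (sub_nonneg.mpr hbq1)]

section Aux
variable {E : Type*} [NormedAddCommGroup E] [NormedSpace ℝ E]
set_option linter.unusedSectionVars false

/-- Radial truncation to the unit ball. -/
noncomputable def chi (y : E) : E := (max 1 ‖y‖)⁻¹ • y

lemma chi_max_pos (y : E) : (0:ℝ) < max 1 ‖y‖ := lt_of_lt_of_le one_pos (le_max_left _ _)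

lemma chi_norm_le_one (y : E) : ‖chi y‖ ≤ 1 := by
  rw [chi, norm_smul, Real.norm_eq_abs, abs_of_pos (inv_pos.mpr (chi_max_pos y))]
  calc (max 1 ‖y‖)⁻¹ * ‖y‖ ≤ (max 1 ‖y‖)⁻¹ * (max 1 ‖y‖) :=
        mul_le_mul_of_nonneg_left (le_max_right _ _) (inv_nonneg.mpr (chi_max_pos y).le)
    _ = 1 := inv_mul_cancel₀ (chi_max_pos y).ne'

lemma chi_norm_le (y : E) : ‖chi y‖ ≤ ‖y‖ := by
  rw [chi, norm_smul, Real.norm_eq_abs, abs_of_pos (inv_pos.mpr (chi_max_pos y))]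
  calc (max 1 ‖y‖)⁻¹ * ‖y‖ ≤ 1 * ‖y‖ := by
        apply mul_le_mul_of_nonneg_right _ (norm_nonneg y)
        rw [inv_le_one_iff₀]
        exact Or.inr (le_max_left _ _)
    _ = ‖y‖ := one_mul _

lemma chi_eq_self {y : E} (h : ‖y‖ ≤ 1) : chi y = y := by
  rw [chi, max_eq_left h, inv_one, one_smul]

lemma chi_lip (y z : E) : ‖chi y - chi z‖ ≤ 2 * ‖y - z‖ := by
  set my := max 1 ‖y‖ with hmy
  set mz := max 1 ‖z‖ with hmz
  have hmy1 : (1:ℝ) ≤ my := le_max_left _ _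
  have hmz1 : (1:ℝ) ≤ mz := le_max_left _ _
  have hmy0 : (0:ℝ) < my := chi_max_pos y
  have hmz0 : (0:ℝ) < mz := chi_max_pos z
  have hsplit : chi y - chi z = my⁻¹ • (y - z) + (my⁻¹ - mz⁻¹) • z := by
    rw [chi, chi, smul_sub, sub_smul]; abel
  rw [hsplit]
  have h1 : ‖my⁻¹ • (y - z)‖ ≤ ‖y - z‖ := by
    rw [norm_smul, Real.norm_eq_abs, abs_of_pos (inv_pos.mpr hmy0)]
    calc my⁻¹ * ‖y - z‖ ≤ 1 * ‖y - z‖ := by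
          apply mul_le_mul_of_nonneg_right _ (norm_nonneg _)
          rw [inv_le_one_iff₀]; exact Or.inr hmy1
      _ = ‖y - z‖ := one_mul _
  have h2 : ‖(my⁻¹ - mz⁻¹) • z‖ ≤ ‖y - z‖ := by
    rw [norm_smul, Real.norm_eq_abs, inv_sub_inv hmy0.ne' hmz0.ne', abs_div, abs_mul,
      abs_of_pos hmy0, abs_of_pos hmz0]
    have hd : |mz - my| ≤ ‖y - z‖ := by
      rw [abs_sub_comm, hmy, hmz, max_comm 1 ‖y‖, max_comm 1 ‖z‖]
      exact (abs_max_sub_max_le_abs _ _ _).trans ((abs_norm_sub_norm_le y z))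
    calc |mz - my| / (my * mz) * ‖z‖ = |mz - my| * (‖z‖ / (my * mz)) := by ring
      _ ≤ ‖y - z‖ * 1 := by
          apply mul_le_mul hd _ (by positivity) (norm_nonneg _)
          rw [div_le_one (by positivity)]
          calc ‖z‖ ≤ mz := le_max_right _ _
            _ = 1 * mz := (one_mul _).symm
            _ ≤ my * mz := mul_le_mul_of_nonneg_right hmy1 hmz0.le
      _ = ‖y - z‖ := mul_one _
  calc ‖my⁻¹ • (y - z) + (my⁻¹ - mz⁻¹) • z‖ ≤ ‖my⁻¹ • (y - z)‖ + ‖(my⁻¹ - mz⁻¹) • z‖ :=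
        norm_add_le _ _
    _ ≤ ‖y - z‖ + ‖y - z‖ := add_le_add h1 h2
    _ = 2 * ‖y - z‖ := by ring

/-- Lipschitz bound for `u ↦ ‖u‖^q • u` on the closed unit ball, ordered version. -/
lemma h_diff_bound_aux {q : ℝ} (hq : 0 < q) {u w : E} (hu : ‖u‖ ≤ 1) (hw : ‖w‖ ≤ 1)
    (hle : ‖u‖ ≤ ‖w‖) :
    ‖‖u‖ ^ q • u - ‖w‖ ^ q • w‖ ≤ (q + 2) * ‖u - w‖ := by
  have hsplit : ‖u‖ ^ q • u - ‖w‖ ^ q • w = ‖u‖ ^ q • (u - w) + (‖u‖ ^ q - ‖w‖ ^ q) • w := by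
    rw [smul_sub, sub_smul]; abel
  rw [hsplit]
  have huq1 : ‖u‖ ^ q ≤ 1 := Real.rpow_le_one (norm_nonneg u) hu hq.le
  have h1 : ‖(‖u‖ ^ q) • (u - w)‖ ≤ ‖u - w‖ := by
    rw [norm_smul, Real.norm_eq_abs, abs_of_nonneg (Real.rpow_nonneg (norm_nonneg u) q)]
    calc ‖u‖ ^ q * ‖u - w‖ ≤ 1 * ‖u - w‖ :=
          mul_le_mul_of_nonneg_right huq1 (norm_nonneg _)
      _ = ‖u - w‖ := one_mul _
  have h2 : ‖(‖u‖ ^ q - ‖w‖ ^ q) • w‖ ≤ (q + 1) * ‖u - w‖ := by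
    rw [norm_smul, Real.norm_eq_abs, abs_of_nonpos
      (sub_nonpos.mpr (Real.rpow_le_rpow (norm_nonneg u) hle hq.le)), neg_sub]
    calc (‖w‖ ^ q - ‖u‖ ^ q) * ‖w‖ ≤ (q + 1) * (‖w‖ - ‖u‖) :=
          key_rpow (norm_nonneg u) hle hw hq
      _ ≤ (q + 1) * ‖u - w‖ := by
          apply mul_le_mul_of_nonneg_left _ (by linarith)
          calc ‖w‖ - ‖u‖ ≤ ‖w - u‖ := norm_sub_norm_le _ _
            _ = ‖u - w‖ := norm_sub_rev _ _
  calc ‖(‖u‖ ^ q) • (u - w) + (‖u‖ ^ q - ‖w‖ ^ q) • w‖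
      ≤ ‖(‖u‖ ^ q) • (u - w)‖ + ‖(‖u‖ ^ q - ‖w‖ ^ q) • w‖ := norm_add_le _ _
    _ ≤ ‖u - w‖ + (q + 1) * ‖u - w‖ := add_le_add h1 h2
    _ = (q + 2) * ‖u - w‖ := by ring

lemma h_diff_bound {q : ℝ} (hq : 0 < q) {u w : E} (hu : ‖u‖ ≤ 1) (hw : ‖w‖ ≤ 1) :
    ‖‖u‖ ^ q • u - ‖w‖ ^ q • w‖ ≤ (q + 2) * ‖u - w‖ := by
  rcases le_total ‖u‖ ‖w‖ with h | h
  · exact h_diff_bound_aux hq hu hw h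
  · rw [norm_sub_rev, norm_sub_rev u w]
    exact h_diff_bound_aux hq hw hu h

end Aux

set_option maxHeartbeats 1600000 in
/-- Case (iii) with contraction: `σ = -1 + 2/n`, `a₁ < 0` (so `T₁ = T₀ > 0` and `A ≡ 0`).
Small-data global existence of a `C¹` solution of `D_t²Y + λ|Y|^{p-1}Y = 0` on `[0, T₀)`,
with bounded value and bounded derivative, where `T₀ = -2a₀/(n(1+σ)a₁)`. -/
theorem stmt_4 (n : ℕ) (hn : 1 ≤ n) (σ a₀ a₁ lam p : ℝ)
    (ha₀ : 0 < a₀) (ha₁ : a₁ < 0) (hσ : σ = -1 + 2 / (n : ℝ)) (hp : 1 < p) :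
    ∃ ε : ℝ, 0 < ε ∧
      ∀ Y₀ Y₁ : EuclideanSpace ℝ (Fin n), ‖Y₀‖ ≤ ε → ‖Y₁‖ ≤ ε →
        ∃ Y Y' : ℝ → EuclideanSpace ℝ (Fin n),
          (∀ t ∈ Ico (0 : ℝ) (-(2 * a₀) / ((n : ℝ) * (1 + σ) * a₁)),
            HasDerivWithinAt Y (Y' t) (Ico (0 : ℝ) (-(2 * a₀) / ((n : ℝ) * (1 + σ) * a₁))) t) ∧
          (∀ t ∈ Ico (0 : ℝ) (-(2 * a₀) / ((n : ℝ) * (1 + σ) * a₁)),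
            HasDerivWithinAt Y' (-((lam * ‖Y t‖ ^ (p - 1)) • Y t))
              (Ico (0 : ℝ) (-(2 * a₀) / ((n : ℝ) * (1 + σ) * a₁))) t) ∧
          ContinuousOn Y' (Ico (0 : ℝ) (-(2 * a₀) / ((n : ℝ) * (1 + σ) * a₁))) ∧
          Y 0 = Y₀ ∧ Y' 0 = Y₁ ∧
          ∃ M : ℝ, ∀ t ∈ Ico (0 : ℝ) (-(2 * a₀) / ((n : ℝ) * (1 + σ) * a₁)),
            ‖Y t‖ ≤ M ∧ ‖Y' t‖ ≤ M := by
  have hn0 : (0:ℝ) < (n:ℝ) := by exact_mod_cast Nat.pos_of_ne_zero (by omega)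
  have hcoef : (n : ℝ) * (1 + σ) = 2 := by
    rw [hσ]; field_simp; ring
  set T : ℝ := -(2 * a₀) / ((n : ℝ) * (1 + σ) * a₁) with hTdef
  have hT : 0 < T := by
    rw [hTdef, hcoef]
    exact div_pos_iff.mpr (Or.inr ⟨by linarith, by linarith⟩)
  set q : ℝ := p - 1 with hqdef
  have hq : 0 < q := by rw [hqdef]; linarith
  set K : ℝ := max 1 |lam| with hKdef
  have hK1 : (1:ℝ) ≤ K := le_max_left _ _
  have hKlam : |lam| ≤ K := le_max_right _ _
  have hK0 : (0:ℝ) < K := lt_of_lt_of_le one_pos hK1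
  refine ⟨Real.exp (-(K * T)), Real.exp_pos _, ?_⟩
  intro Y₀ Y₁ hY₀ hY₁
  set F : ℝ → (EuclideanSpace ℝ (Fin n) × EuclideanSpace ℝ (Fin n)) →
      (EuclideanSpace ℝ (Fin n) × EuclideanSpace ℝ (Fin n)) :=
    fun _ x => (chi x.2, -((lam * ‖chi x.1‖ ^ q) • chi x.1)) with hFdef
  -- norm of the truncated nonlinearity
  have hg_norm : ∀ y : EuclideanSpace ℝ (Fin n),
      ‖-((lam * ‖chi y‖ ^ q) • chi y)‖ = |lam| * (‖chi y‖ ^ q * ‖chi y‖) := by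
    intro y
    rw [norm_neg, norm_smul, Real.norm_eq_abs, abs_mul,
      abs_of_nonneg (Real.rpow_nonneg (norm_nonneg _) _)]
    ring
  have hchiq1 : ∀ y : EuclideanSpace ℝ (Fin n), ‖chi y‖ ^ q ≤ 1 :=
    fun y => Real.rpow_le_one (norm_nonneg _) (chi_norm_le_one y) hq.le
  have hchiq0 : ∀ y : EuclideanSpace ℝ (Fin n), 0 ≤ ‖chi y‖ ^ q :=
    fun y => Real.rpow_nonneg (norm_nonneg _) _
  have hg_le1 : ∀ y : EuclideanSpace ℝ (Fin n),
      ‖-((lam * ‖chi y‖ ^ q) • chi y)‖ ≤ |lam| := by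
    intro y
    rw [hg_norm y]
    have h1 : ‖chi y‖ ^ q * ‖chi y‖ ≤ 1 := by
      nlinarith [hchiq1 y, chi_norm_le_one y, norm_nonneg (chi y), hchiq0 y]
    nlinarith [abs_nonneg lam]
  have hg_ley : ∀ y : EuclideanSpace ℝ (Fin n),
      ‖-((lam * ‖chi y‖ ^ q) • chi y)‖ ≤ |lam| * ‖y‖ := by
    intro y
    rw [hg_norm y]
    have h1 : ‖chi y‖ ^ q * ‖chi y‖ ≤ ‖y‖ := by
      nlinarith [hchiq1 y, chi_norm_le y, norm_nonneg (chi y), hchiq0 y]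
    nlinarith [abs_nonneg lam]
  -- global norm bounds for F
  have hF_C : ∀ (t : ℝ) (x : EuclideanSpace ℝ (Fin n) × EuclideanSpace ℝ (Fin n)),
      ‖F t x‖ ≤ K := by
    intro t x
    have : ‖F t x‖ = max ‖chi x.2‖ ‖-((lam * ‖chi x.1‖ ^ q) • chi x.1)‖ := rfl
    rw [this]
    exact max_le ((chi_norm_le_one _).trans hK1) ((hg_le1 _).trans hKlam)
  have hF_le : ∀ (t : ℝ) (x : EuclideanSpace ℝ (Fin n) × EuclideanSpace ℝ (Fin n)),
      ‖F t x‖ ≤ K * ‖x‖ := by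
    intro t x
    have : ‖F t x‖ = max ‖chi x.2‖ ‖-((lam * ‖chi x.1‖ ^ q) • chi x.1)‖ := rfl
    rw [this]
    apply max_le
    · calc ‖chi x.2‖ ≤ ‖x.2‖ := chi_norm_le _
        _ ≤ ‖x‖ := norm_snd_le x
        _ ≤ K * ‖x‖ := le_mul_of_one_le_left (norm_nonneg _) hK1
    · calc ‖-((lam * ‖chi x.1‖ ^ q) • chi x.1)‖ ≤ |lam| * ‖x.1‖ := hg_ley _
        _ ≤ K * ‖x‖ := mul_le_mul hKlam (norm_fst_le x) (norm_nonneg _) hK0.le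
  -- Lipschitz bound for F
  have hFlip : ∀ t : ℝ, LipschitzWith (2 + 2 * |lam| * (q + 2)).toNNReal (F t) := by
    intro t
    apply LipschitzWith.of_dist_le_mul
    intro x y
    rw [dist_eq_norm, dist_eq_norm, Real.coe_toNNReal _ (by positivity)]
    have hnorm : ‖F t x - F t y‖ =
        max ‖chi x.2 - chi y.2‖
          ‖-((lam * ‖chi x.1‖ ^ q) • chi x.1) - -((lam * ‖chi y.1‖ ^ q) • chi y.1)‖ := rfl
    rw [hnorm]
    have hx1 : ‖x.1 - y.1‖ ≤ ‖x - y‖ := norm_fst_le (x - y)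
    have hx2 : ‖x.2 - y.2‖ ≤ ‖x - y‖ := norm_snd_le (x - y)
    have hnn : (0:ℝ) ≤ ‖x - y‖ := norm_nonneg _
    apply max_le
    · calc ‖chi x.2 - chi y.2‖ ≤ 2 * ‖x.2 - y.2‖ := chi_lip _ _
        _ ≤ 2 * ‖x - y‖ := by linarith
        _ ≤ (2 + 2 * |lam| * (q + 2)) * ‖x - y‖ := by
            nlinarith [mul_nonneg (by positivity : (0:ℝ) ≤ 2 * |lam| * (q + 2)) hnn]
    · have hsplit : -((lam * ‖chi x.1‖ ^ q) • chi x.1) - -((lam * ‖chi y.1‖ ^ q) • chi y.1) =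
          (-lam) • ((‖chi x.1‖ ^ q) • chi x.1 - (‖chi y.1‖ ^ q) • chi y.1) := by
        rw [mul_smul, mul_smul, smul_sub, neg_smul, neg_smul]
      rw [hsplit, norm_smul, Real.norm_eq_abs, abs_neg]
      calc |lam| * ‖(‖chi x.1‖ ^ q) • chi x.1 - (‖chi y.1‖ ^ q) • chi y.1‖
          ≤ |lam| * ((q + 2) * ‖chi x.1 - chi y.1‖) := by
            apply mul_le_mul_of_nonneg_left _ (abs_nonneg _)
            exact h_diff_bound hq (chi_norm_le_one _) (chi_norm_le_one _)
        _ ≤ |lam| * ((q + 2) * (2 * ‖x.1 - y.1‖)) := by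
            apply mul_le_mul_of_nonneg_left _ (abs_nonneg _)
            apply mul_le_mul_of_nonneg_left (chi_lip _ _) (by linarith)
        _ = 2 * |lam| * (q + 2) * ‖x.1 - y.1‖ := by ring
        _ ≤ 2 * |lam| * (q + 2) * ‖x - y‖ :=
            mul_le_mul_of_nonneg_left hx1 (by positivity)
        _ ≤ (2 + 2 * |lam| * (q + 2)) * ‖x - y‖ := by nlinarith [hnn]
  -- Picard–Lindelöf
  have hPL : IsPicardLindelof F (tmin := 0) (tmax := T) ⟨0, ⟨le_refl 0, hT.le⟩⟩ (Y₀, Y₁)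
      (K * T).toNNReal 0 K.toNNReal (2 + 2 * |lam| * (q + 2)).toNNReal :=
    { lipschitzOnWith := fun t _ => (hFlip t).lipschitzOnWith
      continuousOn := fun x _ => continuousOn_const
      norm_le := fun t _ x _ => by rw [Real.coe_toNNReal _ hK0.le]; exact hF_C t x
      mul_max_le := by
        simp only [NNReal.coe_zero, sub_zero, sub_self, Real.coe_toNNReal _ hK0.le,
          Real.coe_toNNReal _ (mul_pos hK0 hT).le]
        rw [max_eq_left hT.le] }
  obtain ⟨α, hα0, hαd⟩ := hPL.exists_eq_forall_mem_Icc_hasDerivWithinAt₀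
  replace hα0 : α 0 = (Y₀, Y₁) := hα0
  -- Grönwall a priori bound
  have hcontα : ContinuousOn α (Icc 0 T) := fun t ht => (hαd t ht).continuousWithinAt
  have hder' : ∀ t ∈ Ico 0 T, HasDerivWithinAt α (F t (α t)) (Ici t) t := by
    intro t ht
    refine (hαd t ⟨ht.1, ht.2.le⟩).mono_of_mem_nhdsWithin ?_
    rw [mem_nhdsWithin]
    exact ⟨Iio T, isOpen_Iio, ht.2, fun x hx => ⟨ht.1.trans hx.2, hx.1.le⟩⟩
  have hα0norm : ‖α 0‖ ≤ Real.exp (-(K * T)) := by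
    rw [hα0, Prod.norm_def]
    exact max_le hY₀ hY₁
  have hgron := norm_le_gronwallBound_of_norm_deriv_right_le (K := K) (ε := 0)
    (δ := Real.exp (-(K * T))) hcontα hder' hα0norm
    (fun t _ => by rw [add_zero]; exact hF_le t (α t))
  have hb1 : ∀ t ∈ Icc 0 T, ‖α t‖ ≤ 1 := by
    intro t ht
    refine (hgron t ht).trans ?_
    rw [sub_zero, gronwallBound_ε0, ← Real.exp_add, Real.exp_le_one_iff]
    nlinarith [mul_le_mul_of_nonneg_left ht.2 hK0.le]
  have hfst1 : ∀ t ∈ Icc 0 T, ‖(α t).1‖ ≤ 1 :=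
    fun t ht => (norm_fst_le (α t)).trans (hb1 t ht)
  have hsnd1 : ∀ t ∈ Icc 0 T, ‖(α t).2‖ ≤ 1 :=
    fun t ht => (norm_snd_le (α t)).trans (hb1 t ht)
  -- componentwise derivatives
  have hYd : ∀ t ∈ Icc 0 T,
      HasDerivWithinAt (fun s => (α s).1) ((F t (α t)).1) (Icc 0 T) t := by
    intro t ht
    exact (ContinuousLinearMap.fst ℝ (EuclideanSpace ℝ (Fin n))
      (EuclideanSpace ℝ (Fin n))).hasFDerivAt.comp_hasDerivWithinAt t (hαd t ht)
  have hVd : ∀ t ∈ Icc 0 T,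
      HasDerivWithinAt (fun s => (α s).2) ((F t (α t)).2) (Icc 0 T) t := by
    intro t ht
    exact (ContinuousLinearMap.snd ℝ (EuclideanSpace ℝ (Fin n))
      (EuclideanSpace ℝ (Fin n))).hasFDerivAt.comp_hasDerivWithinAt t (hαd t ht)
  refine ⟨fun s => (α s).1, fun s => (α s).2, ?_, ?_, ?_, ?_, ?_, 1, ?_⟩
  · intro t ht
    have ht' : t ∈ Icc 0 T := ⟨ht.1, ht.2.le⟩
    have hval : (F t (α t)).1 = (α t).2 := chi_eq_self (hsnd1 t ht')
    show HasDerivWithinAt (fun s => (α s).1) ((α t).2) (Ico 0 T) t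
    rw [← hval]
    exact (hYd t ht').mono Ico_subset_Icc_self
  · intro t ht
    have ht' : t ∈ Icc 0 T := ⟨ht.1, ht.2.le⟩
    have hval : (F t (α t)).2 = -((lam * ‖(α t).1‖ ^ q) • (α t).1) := by
      show -((lam * ‖chi (α t).1‖ ^ q) • chi (α t).1) = _
      rw [chi_eq_self (hfst1 t ht')]
    rw [← hval]
    exact (hVd t ht').mono Ico_subset_Icc_self
  · intro t ht
    exact ((hVd t ⟨ht.1, ht.2.le⟩).continuousWithinAt).mono Ico_subset_Icc_self
  · show (α 0).1 = Y₀
    rw [hα0]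
  · show (α 0).2 = Y₁
    rw [hα0]
  · intro t ht
    have ht' : t ∈ Icc 0 T := ⟨ht.1, ht.2.le⟩
    exact ⟨hfst1 t ht', hsnd1 t ht'⟩
end
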